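/- arXiv:0902.3039 — 9 statements merged into one kernel-verified Lean document; each statement's English description precedes it below -/
import Mathlib

section
/- Let a, b be real numbers with 1/3 < a − b < 4/π² and 1/2 < a ≤ 2/π − b. Suppose further that 16ab(b−a) + (a+b)² > 0 and that x₂ := ((a+b)(2b−2a+1) + √(16ab(b−a)+(a+b)²)) / (2(a−b)²) ∈ (0,1). Then for every x ∈ (0,1), arccos(x) ≥ ((1+x₂)^{b+1/2} (1−x₂)^{1/2−a} / (a+b+(a−b)x₂)) · (1−x)^a / (1+x)^b. -/
open Real Set
open Topology Filter

noncomputable def calL (a b x : ℝ) : ℝ := a + b + (a - b) * x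
noncomputable def calQ (a b x : ℝ) : ℝ :=
  (a - b) ^ 2 * x ^ 2 + (a + b) * (2 * a - 2 * b - 1) * x + (a + b) ^ 2 - (a - b)
noncomputable def calPsi (a b x : ℝ) : ℝ := Real.arccos x - Real.sqrt (1 - x ^ 2) / calL a b x
noncomputable def calPhi (a b x : ℝ) : ℝ := Real.arccos x * (1 + x) ^ b / (1 - x) ^ a
noncomputable def calG (a b x : ℝ) : ℝ :=
  (1 + x) ^ (b + 1 / 2) * (1 - x) ^ (1 / 2 - a) / calL a b x

lemma hasDerivAt_calL (a b x : ℝ) : HasDerivAt (calL a b) (a - b) x := by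
  exact (((hasDerivAt_id x).const_mul (a - b)).const_add (a + b)).congr_deriv (by simp)

lemma hasDerivAt_calPsi (a b : ℝ) {x : ℝ} (hx1 : -1 < x) (hx2 : x < 1)
    (hL : calL a b x ≠ 0) :
    HasDerivAt (calPsi a b)
      (-(calQ a b x) / (Real.sqrt (1 - x ^ 2) * (calL a b x) ^ 2)) x := by
  have hx2' : 0 < 1 - x ^ 2 := by nlinarith
  have hu : Real.sqrt (1 - x ^ 2) ≠ 0 := by positivity
  have hu2 : Real.sqrt (1 - x ^ 2) * Real.sqrt (1 - x ^ 2) = 1 - x ^ 2 :=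
    Real.mul_self_sqrt hx2'.le
  have h1 : HasDerivAt (fun t : ℝ => 1 - t ^ 2) (-(2 * x)) x := by
    simpa using ((hasDerivAt_pow 2 x)).const_sub 1
  have h2 : HasDerivAt (fun t : ℝ => Real.sqrt (1 - t ^ 2))
      (-(2 * x) / (2 * Real.sqrt (1 - x ^ 2))) x := h1.sqrt (by positivity)
  have h3 := (hasDerivAt_arccos hx1.ne' hx2.ne).sub (h2.div (hasDerivAt_calL a b x) hL)
  have hQ : -(calQ a b x) =
      -(calL a b x) ^ 2 + x * calL a b x +
        Real.sqrt (1 - x ^ 2) ^ 2 * (a - b) := by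
    rw [Real.sq_sqrt hx2'.le]; unfold calQ calL; ring
  refine h3.congr_deriv ?_
  symm
  rw [hQ]
  clear h1 h2 h3 hQ hu2
  unfold calL at *
  generalize Real.sqrt (1 - x ^ 2) = u at hu ⊢
  field_simp
  ring

lemma hasDerivAt_calPhi (a b : ℝ) {x : ℝ} (hx1 : -1 < x) (hx2 : x < 1) :
    HasDerivAt (calPhi a b)
      ((1 + x) ^ b / (1 - x) ^ a *
        (Real.arccos x * calL a b x / ((1 - x) * (1 + x)) - 1 / Real.sqrt (1 - x ^ 2))) x := by
  have h1p : (0 : ℝ) < 1 + x := by linarith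
  have h2p : (0 : ℝ) < 1 - x := by linarith
  have hx2' : (0 : ℝ) < 1 - x ^ 2 := by nlinarith
  have hu : Real.sqrt (1 - x ^ 2) ≠ 0 := by positivity
  have hA : HasDerivAt (fun t : ℝ => (1 + t) ^ b) (1 * b * (1 + x) ^ (b - 1)) x :=
    ((hasDerivAt_id x).const_add 1).rpow_const (Or.inl h1p.ne')
  have hB : HasDerivAt (fun t : ℝ => (1 - t) ^ a) ((-1) * a * (1 - x) ^ (a - 1)) x :=
    ((hasDerivAt_id x).const_sub 1).rpow_const (Or.inl h2p.ne')
  have hBne : (1 - x) ^ a ≠ 0 := by positivity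
  have h3 := ((hasDerivAt_arccos hx1.ne' hx2.ne).mul hA).div hB hBne
  refine h3.congr_deriv ?_
  symm
  simp only [Pi.mul_apply]
  rw [Real.rpow_sub_one h1p.ne' b, Real.rpow_sub_one h2p.ne' a]
  unfold calL
  have hAne : (1 + x) ^ b ≠ 0 := by positivity
  generalize Real.sqrt (1 - x ^ 2) = u at hu ⊢
  generalize (1 + x) ^ b = A at hAne ⊢
  generalize (1 - x) ^ a = B at hBne ⊢
  field_simp
  ring

lemma hasDerivAt_calG (a b : ℝ) {x : ℝ} (hx1 : -1 < x) (hx2 : x < 1)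
    (hL : calL a b x ≠ 0) :
    HasDerivAt (calG a b)
      (calG a b x *
        ((b + 1 / 2) / (1 + x) + (a - 1 / 2) / (1 - x) - (a - b) / calL a b x)) x := by
  have h1p : (0 : ℝ) < 1 + x := by linarith
  have h2p : (0 : ℝ) < 1 - x := by linarith
  have hA : HasDerivAt (fun t : ℝ => (1 + t) ^ (b + 1 / 2))
      (1 * (b + 1 / 2) * (1 + x) ^ (b + 1 / 2 - 1)) x :=
    ((hasDerivAt_id x).const_add 1).rpow_const (Or.inl h1p.ne')
  have hB : HasDerivAt (fun t : ℝ => (1 - t) ^ (1 / 2 - a))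
      ((-1) * (1 / 2 - a) * (1 - x) ^ (1 / 2 - a - 1)) x :=
    ((hasDerivAt_id x).const_sub 1).rpow_const (Or.inl h2p.ne')
  have h3 := (hA.mul hB).div (hasDerivAt_calL a b x) hL
  refine h3.congr_deriv ?_
  symm
  simp only [Pi.mul_apply]
  rw [Real.rpow_sub_one h1p.ne' (b + 1 / 2), Real.rpow_sub_one h2p.ne' (1 / 2 - a)]
  unfold calG calL at *
  have hAne : (1 + x) ^ (b + 1 / 2) ≠ 0 := by positivity
  have hBne : (1 - x) ^ (1 / 2 - a) ≠ 0 := by positivity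
  generalize (1 + x) ^ (b + 1 / 2) = A at hAne ⊢
  generalize (1 - x) ^ (1 / 2 - a) = B at hBne ⊢
  field_simp
  ring

lemma calG_le_calPhi (a b : ℝ) {x : ℝ} (hx0 : 0 ≤ x) (hx1 : x < 1)
    (hL : 0 < calL a b x) (hpsi : 0 ≤ calPsi a b x) : calG a b x ≤ calPhi a b x := by
  have h1p : (0 : ℝ) < 1 + x := by linarith
  have h2p : (0 : ℝ) < 1 - x := by linarith
  have harc : Real.sqrt (1 - x ^ 2) / calL a b x ≤ Real.arccos x := by
    unfold calPsi at hpsi; linarith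
  have hsq : Real.sqrt (1 - x ^ 2) = (1 + x) ^ ((1 : ℝ) / 2) * (1 - x) ^ ((1 : ℝ) / 2) := by
    rw [show (1 : ℝ) - x ^ 2 = (1 + x) * (1 - x) by ring, Real.sqrt_mul h1p.le,
      Real.sqrt_eq_rpow, Real.sqrt_eq_rpow]
  have hGid : calG a b x = Real.sqrt (1 - x ^ 2) / calL a b x * ((1 + x) ^ b / (1 - x) ^ a) := by
    unfold calG
    have e1 : (1 + x) ^ (b + 1 / 2) = (1 + x) ^ b * (1 + x) ^ ((1 : ℝ) / 2) :=
      Real.rpow_add h1p b (1 / 2)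
    have e2 : (1 - x) ^ (1 / 2 - a) = (1 - x) ^ ((1 : ℝ) / 2) / (1 - x) ^ a :=
      Real.rpow_sub h2p (1 / 2) a
    rw [e1, e2, hsq]
    have hBne : (1 - x) ^ a ≠ 0 := by positivity
    field_simp
  rw [hGid]
  have hABpos : (0 : ℝ) ≤ (1 + x) ^ b / (1 - x) ^ a := by positivity
  calc Real.sqrt (1 - x ^ 2) / calL a b x * ((1 + x) ^ b / (1 - x) ^ a)
      ≤ Real.arccos x * ((1 + x) ^ b / (1 - x) ^ a) :=
        mul_le_mul_of_nonneg_right harc hABpos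
    _ = calPhi a b x := by unfold calPhi; ring

lemma deriv_calPhi_nonpos (a b : ℝ) {x : ℝ} (hx1 : -1 < x) (hx2 : x < 1)
    (hL : 0 < calL a b x) (hpsi : calPsi a b x ≤ 0) : deriv (calPhi a b) x ≤ 0 := by
  rw [(hasDerivAt_calPhi a b hx1 hx2).deriv]
  have h1p : (0 : ℝ) < 1 + x := by linarith
  have h2p : (0 : ℝ) < 1 - x := by linarith
  have hx2' : (0 : ℝ) < 1 - x ^ 2 := by nlinarith
  have hup : 0 < Real.sqrt (1 - x ^ 2) := Real.sqrt_pos.mpr hx2'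
  have key : Real.arccos x * calL a b x ≤ Real.sqrt (1 - x ^ 2) := by
    have h' : Real.arccos x ≤ Real.sqrt (1 - x ^ 2) / calL a b x := by
      unfold calPsi at hpsi; linarith
    exact (le_div_iff₀ hL).mp h'
  apply mul_nonpos_of_nonneg_of_nonpos (by positivity)
  rw [sub_nonpos]
  have hmul : (1 - x) * (1 + x) = Real.sqrt (1 - x ^ 2) * Real.sqrt (1 - x ^ 2) := by
    rw [Real.mul_self_sqrt hx2'.le]; ring
  calc Real.arccos x * calL a b x / ((1 - x) * (1 + x))
      ≤ Real.sqrt (1 - x ^ 2) / ((1 - x) * (1 + x)) := by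
        apply div_le_div_of_nonneg_right ?_ (by positivity)
        · exact key
    _ = 1 / Real.sqrt (1 - x ^ 2) := by
        rw [div_eq_div_iff (by positivity) hup.ne', hmul]; ring

lemma deriv_calG_eq (a b : ℝ) {x : ℝ} (hx1 : -1 < x) (hx2 : x < 1)
    (hL : calL a b x ≠ 0) :
    deriv (calG a b) x = calG a b x * calQ a b x / ((1 - x) * (1 + x) * calL a b x) := by
  rw [(hasDerivAt_calG a b hx1 hx2 hL).deriv]
  have h1p : (0 : ℝ) < 1 + x := by linarith
  have h2p : (0 : ℝ) < 1 - x := by linarith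
  have hbr : (b + 1 / 2) / (1 + x) + (a - 1 / 2) / (1 - x) - (a - b) / calL a b x =
      calQ a b x / ((1 - x) * (1 + x) * calL a b x) := by
    unfold calQ calL at *
    rw [div_add_div _ _ h1p.ne' h2p.ne', div_sub_div _ _ (mul_ne_zero h1p.ne' h2p.ne') hL,
      div_eq_div_iff (mul_ne_zero (mul_ne_zero h1p.ne' h2p.ne') hL) (mul_ne_zero (mul_ne_zero h2p.ne' h1p.ne') hL)]
    ring
  rw [hbr, mul_div_assoc]

lemma continuousAt_calPsi (a b : ℝ) {x : ℝ} (hL : calL a b x ≠ 0) :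
    ContinuousAt (calPsi a b) x := by
  have hc : Continuous fun t : ℝ => Real.sqrt (1 - t ^ 2) :=
    Real.continuous_sqrt.comp (by continuity)
  have hcL : Continuous (calL a b) := by unfold calL; continuity
  exact Real.continuous_arccos.continuousAt.sub
    (hc.continuousAt.div hcL.continuousAt hL)

set_option maxHeartbeats 2000000 in
theorem carlson_arccos_lower_bound_extreme (a b : ℝ)
    (h1 : 1 / 3 < a - b) (h2 : a - b < 4 / Real.pi ^ 2)
    (h3 : 1 / 2 < a) (h4 : a ≤ 2 / Real.pi - b)
    (h5 : 16 * a * b * (b - a) + (a + b) ^ 2 > 0)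
    (h6 : ((a + b) * (2 * b - 2 * a + 1) +
        Real.sqrt (16 * a * b * (b - a) + (a + b) ^ 2)) / (2 * (a - b) ^ 2) ∈
        Set.Ioo (0 : ℝ) 1) :
    ∀ x ∈ Set.Ioo (0 : ℝ) 1,
      Real.arccos x ≥
        ((1 + ((a + b) * (2 * b - 2 * a + 1) +
              Real.sqrt (16 * a * b * (b - a) + (a + b) ^ 2)) / (2 * (a - b) ^ 2)) ^ (b + 1 / 2) *
          (1 - ((a + b) * (2 * b - 2 * a + 1) +
              Real.sqrt (16 * a * b * (b - a) + (a + b) ^ 2)) / (2 * (a - b) ^ 2)) ^ (1 / 2 - a) /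
          (a + b + (a - b) * (((a + b) * (2 * b - 2 * a + 1) +
              Real.sqrt (16 * a * b * (b - a) + (a + b) ^ 2)) / (2 * (a - b) ^ 2)))) *
        ((1 - x) ^ a / (1 + x) ^ b) := by
  have hπ : (3 : ℝ) < Real.pi := Real.pi_gt_three
  have hπ2 : (9 : ℝ) < Real.pi ^ 2 := by nlinarith
  have h49 : 4 / Real.pi ^ 2 < 4 / 9 := by
    rw [div_lt_div_iff₀ (by positivity) (by norm_num)]; nlinarith
  have hr1 : 1 / 3 < a - b := h1
  have hr2 : a - b < 4 / 9 := h2.trans h49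
  have hb0 : (0 : ℝ) < b := by linarith
  have hs0 : (0 : ℝ) < a + b := by linarith
  have hspi : (a + b) * Real.pi ≤ 2 := by
    have hs : a + b ≤ 2 / Real.pi := by linarith
    calc (a + b) * Real.pi ≤ 2 / Real.pi * Real.pi := by
          apply mul_le_mul_of_nonneg_right hs Real.pi_pos.le
      _ = 2 := by field_simp
  have hLpos : ∀ t : ℝ, -1 ≤ t → 0 < calL a b t := by
    intro t ht; unfold calL; nlinarith
  set D := 16 * a * b * (b - a) + (a + b) ^ 2 with hDdef
  set sd := Real.sqrt D with hsddef
  have hsd2 : sd ^ 2 = D := Real.sq_sqrt h5.le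
  have hsdpos : 0 < sd := Real.sqrt_pos.mpr h5
  set x₂ := ((a + b) * (2 * b - 2 * a + 1) + sd) / (2 * (a - b) ^ 2) with hx2def
  obtain ⟨hx2pos, hx2lt⟩ := h6
  set x₁ := ((a + b) * (2 * b - 2 * a + 1) - sd) / (2 * (a - b) ^ 2) with hx1def
  have hrpos : (0:ℝ) < a - b := by linarith
  have hrne : (a - b) ≠ 0 := hrpos.ne'
  have hr2pos : (0:ℝ) < (a - b) ^ 2 := by positivity
  have hQfact : ∀ t : ℝ, calQ a b t = (a - b) ^ 2 * (t - x₁) * (t - x₂) := by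
    intro t
    unfold calQ
    rw [hx1def, hx2def]
    field_simp
    linear_combination hsd2
  have hx12 : x₁ < x₂ := by
    rw [hx1def, hx2def, div_lt_div_iff₀ (by positivity) (by positivity)]
    nlinarith [mul_pos hsdpos (by positivity : (0:ℝ) < 2 * (a - b) ^ 2)]
  have hpsi0 : calPsi a b 0 ≤ 0 := by
    unfold calPsi calL
    norm_num [Real.arccos_zero]
    rw [inv_eq_one_div, le_div_iff₀ hs0]
    nlinarith
  have hpsi1 : calPsi a b 1 = 0 := by
    unfold calPsi
    norm_num [Real.arccos_one]
  -- ψ is strictly decreasing on [x₂, 1]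
  have M1 : StrictAntiOn (calPsi a b) (Icc x₂ 1) := by
    apply strictAntiOn_of_deriv_neg (convex_Icc _ _)
    · intro t ht
      exact (continuousAt_calPsi a b (hLpos t (by linarith [ht.1])).ne').continuousWithinAt
    · rw [interior_Icc]
      intro t ht
      have ht1 : -1 < t := by linarith [ht.1]
      rw [(hasDerivAt_calPsi a b ht1 ht.2 (hLpos t ht1.le).ne').deriv]
      apply div_neg_of_neg_of_pos
      · rw [hQfact]
        have hp : 0 < (t - x₁) := by linarith [ht.1, hx12]
        have hq : 0 < (t - x₂) := by linarith [ht.1]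
        have : 0 < (a - b) ^ 2 * (t - x₁) * (t - x₂) :=
          mul_pos (mul_pos hr2pos hp) hq
        linarith
      · have hts : 0 < Real.sqrt (1 - t ^ 2) := Real.sqrt_pos.mpr
          (by nlinarith [ht.2, lt_trans hx2pos ht.1])
        exact mul_pos hts (pow_pos (hLpos t ht1.le) 2)
  have hpsix2 : 0 < calPsi a b x₂ := by
    have := M1 ⟨le_refl _, hx2lt.le⟩ ⟨hx2lt.le, le_refl _⟩ hx2lt
    rw [hpsi1] at this; exact this
  -- ψ monotone on [max x₁ 0, x₂]
  have M6 : MonotoneOn (calPsi a b) (Icc (max x₁ 0) x₂) := by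
    apply monotoneOn_of_deriv_nonneg (convex_Icc _ _)
    · intro t ht
      exact (continuousAt_calPsi a b
        (hLpos t (by linarith [le_trans (le_max_right x₁ 0) ht.1])).ne').continuousWithinAt
    · rw [interior_Icc]
      intro t ht
      have ht0 : 0 < t := lt_of_le_of_lt (le_max_right x₁ 0) ht.1
      have ht1 : t < 1 := lt_trans ht.2 hx2lt
      exact ((hasDerivAt_calPsi a b (by linarith) ht1
        (hLpos t (by linarith)).ne').differentiableAt).differentiableWithinAt
    · rw [interior_Icc]
      intro t ht
      have ht0 : 0 < t := lt_of_le_of_lt (le_max_right x₁ 0) ht.1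
      have ht1 : t < 1 := lt_trans ht.2 hx2lt
      rw [(hasDerivAt_calPsi a b (by linarith) ht1 (hLpos t (by linarith)).ne').deriv]
      apply div_nonneg
      · rw [hQfact]
        have h1 : 0 ≤ (t - x₁) := by linarith [le_trans (le_max_left x₁ 0) ht.1.le]
        have h2 : t - x₂ ≤ 0 := by linarith [ht.2]
        have : (a - b) ^ 2 * (t - x₁) * (t - x₂) ≤ 0 :=
          mul_nonpos_of_nonneg_of_nonpos (mul_nonneg hr2pos.le h1) h2
        linarith
      · exact mul_nonneg (Real.sqrt_nonneg _)
          (pow_pos (hLpos t (by linarith : (-1:ℝ) ≤ t)) 2).le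
  -- ψ antitone on [0, x₁]
  have M2 : AntitoneOn (calPsi a b) (Icc 0 x₁) := by
    apply antitoneOn_of_deriv_nonpos (convex_Icc _ _)
    · intro t ht
      exact (continuousAt_calPsi a b (hLpos t (by linarith [ht.1])).ne').continuousWithinAt
    · rw [interior_Icc]
      intro t ht
      have ht1 : t < 1 := by linarith [ht.2, hx12, hx2lt]
      exact ((hasDerivAt_calPsi a b (by linarith [ht.1]) ht1
        (hLpos t (by linarith [ht.1])).ne').differentiableAt).differentiableWithinAt
    · rw [interior_Icc]
      intro t ht
      have ht1 : t < 1 := by linarith [ht.2, hx12, hx2lt]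
      rw [(hasDerivAt_calPsi a b (by linarith [ht.1]) ht1
        (hLpos t (by linarith [ht.1])).ne').deriv]
      apply div_nonpos_of_nonpos_of_nonneg
      · rw [hQfact]
        have hA : 0 ≤ x₁ - t := by linarith [ht.2]
        have hB : 0 ≤ x₂ - t := by linarith [ht.2, hx12]
        have : 0 ≤ (a - b) ^ 2 * ((x₁ - t) * (x₂ - t)) :=
          mul_nonneg hr2pos.le (mul_nonneg hA hB)
        nlinarith [this]
      · exact mul_nonneg (Real.sqrt_nonneg _)
          (pow_pos (hLpos t (by linarith [ht.1] : (-1:ℝ) ≤ t)) 2).le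
  -- the crossing point xb
  have hcontS : ContinuousOn (calPsi a b) (Icc 0 x₂) := fun t ht =>
    (continuousAt_calPsi a b (hLpos t (by linarith [ht.1])).ne').continuousWithinAt
  set S : Set ℝ := Icc 0 x₂ ∩ calPsi a b ⁻¹' (Iic 0) with hSdef
  have hScl : IsClosed S := hcontS.preimage_isClosed_of_isClosed isClosed_Icc isClosed_Iic
  have hScomp : IsCompact S := isCompact_Icc.of_isClosed_subset hScl inter_subset_left
  have hS0 : (0 : ℝ) ∈ S := ⟨⟨le_refl 0, hx2pos.le⟩, by simpa using hpsi0⟩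
  set xb := sSup S with hxbdef
  have hxbS : xb ∈ S := hScomp.sSup_mem ⟨0, hS0⟩
  have hxb0 : 0 ≤ xb := hxbS.1.1
  have hxb2 : xb ≤ x₂ := hxbS.1.2
  have hpsixb_le : calPsi a b xb ≤ 0 := hxbS.2
  have hgt : ∀ t, xb < t → t ≤ x₂ → 0 < calPsi a b t := by
    intro t h h'
    by_contra hc
    push_neg at hc
    have htS : t ∈ S := ⟨⟨by linarith, h'⟩, hc⟩
    exact absurd (le_csSup hScomp.bddAbove htS) (by linarith)
  have hxbx2 : xb < x₂ := lt_of_le_of_ne hxb2 (by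
    intro h; rw [h] at hpsixb_le; linarith)
  have hxb1 : xb < 1 := lt_trans hxbx2 hx2lt
  have hxbx1 : x₁ ≤ xb := by
    rcases le_or_gt x₁ 0 with h | h
    · linarith
    · have hx1mem : calPsi a b x₁ ≤ 0 := by
        have := M2 ⟨le_refl 0, h.le⟩ ⟨h.le, le_refl x₁⟩ h.le
        linarith [hpsi0]
      exact le_csSup hScomp.bddAbove ⟨⟨h.le, hx12.le⟩, hx1mem⟩
  have hpsixb : calPsi a b xb = 0 := by
    refine le_antisymm hpsixb_le ?_
    by_contra hneg
    push_neg at hneg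
    have hcont : ContinuousAt (calPsi a b) xb :=
      continuousAt_calPsi a b (hLpos xb (by linarith)).ne'
    have hev1 : calPsi a b ⁻¹' (Iio 0) ∈ 𝓝[>] xb :=
      mem_nhdsWithin_of_mem_nhds (hcont (Iio_mem_nhds hneg))
    have hev2 : Ioo xb x₂ ∈ 𝓝[>] xb := Ioo_mem_nhdsGT hxbx2
    obtain ⟨t, ht1, ht2⟩ := Filter.nonempty_of_mem (Filter.inter_mem hev1 hev2)
    exact absurd (hgt t ht2.1 ht2.2.le) (by simpa using not_lt.mpr (le_of_lt ht1))
  -- G antitone on [xb, x₂]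
  have M3 : AntitoneOn (calG a b) (Icc xb x₂) := by
    apply antitoneOn_of_deriv_nonpos (convex_Icc _ _)
    · intro t ht
      have h0 : 0 ≤ t := le_trans hxb0 ht.1
      have h1 : t < 1 := lt_of_le_of_lt ht.2 hx2lt
      exact (hasDerivAt_calG a b (by linarith) h1
        (hLpos t (by linarith)).ne').continuousAt.continuousWithinAt
    · rw [interior_Icc]
      intro t ht
      have h0 : 0 ≤ t := le_trans hxb0 ht.1.le
      have h1 : t < 1 := lt_trans ht.2 hx2lt
      exact (hasDerivAt_calG a b (by linarith) h1
        (hLpos t (by linarith)).ne').differentiableAt.differentiableWithinAt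
    · rw [interior_Icc]
      intro t ht
      have h0 : 0 ≤ t := le_trans hxb0 ht.1.le
      have h1 : t < 1 := lt_trans ht.2 hx2lt
      rw [deriv_calG_eq a b (by linarith) h1 (hLpos t (by linarith)).ne']
      apply div_nonpos_of_nonpos_of_nonneg
      · have hGpos : 0 < calG a b t := by
          unfold calG
          exact div_pos (mul_pos (Real.rpow_pos_of_pos (by linarith) _)
            (Real.rpow_pos_of_pos (by linarith) _)) (hLpos t (by linarith))
        have hQ : calQ a b t ≤ 0 := by
          rw [hQfact]
          have hA : 0 ≤ t - x₁ := by linarith [ht.1, hxbx1]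
          have hB : t - x₂ ≤ 0 := by linarith [ht.2]
          exact mul_nonpos_of_nonneg_of_nonpos (mul_nonneg hr2pos.le hA) hB
        exact mul_nonpos_of_nonneg_of_nonpos hGpos.le hQ
      · exact mul_nonneg (mul_nonneg (by linarith) (by linarith)) (hLpos t (by linarith)).le
  -- G monotone on [x₂, 1)
  have M4 : MonotoneOn (calG a b) (Ico x₂ 1) := by
    apply monotoneOn_of_deriv_nonneg (convex_Ico _ _)
    · intro t ht
      have h0 : 0 ≤ t := le_trans hx2pos.le ht.1
      exact (hasDerivAt_calG a b (by linarith) ht.2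
        (hLpos t (by linarith)).ne').continuousAt.continuousWithinAt
    · rw [interior_Ico]
      intro t ht
      have h0 : 0 ≤ t := le_trans hx2pos.le ht.1.le
      exact (hasDerivAt_calG a b (by linarith) ht.2
        (hLpos t (by linarith)).ne').differentiableAt.differentiableWithinAt
    · rw [interior_Ico]
      intro t ht
      have h0 : 0 ≤ t := le_trans hx2pos.le ht.1.le
      rw [deriv_calG_eq a b (by linarith) ht.2 (hLpos t (by linarith)).ne']
      apply div_nonneg
      · have hGpos : 0 < calG a b t := by
          unfold calG
          exact div_pos (mul_pos (Real.rpow_pos_of_pos (by linarith) _)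
            (Real.rpow_pos_of_pos (by linarith [ht.2]) _)) (hLpos t (by linarith))
        have hQ : 0 ≤ calQ a b t := by
          rw [hQfact]
          have hA : 0 ≤ t - x₁ := by linarith [ht.1, hx12]
          have hB : 0 ≤ t - x₂ := by linarith [ht.1]
          exact mul_nonneg (mul_nonneg hr2pos.le hA) hB
        exact mul_nonneg hGpos.le hQ
      · exact mul_nonneg (mul_nonneg (by linarith [ht.2]) (by linarith)) (hLpos t (by linarith)).le
  -- main comparison
  intro x hx
  obtain ⟨hx0, hx1⟩ := hx
  have hmain : calG a b x₂ ≤ calPhi a b x := by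
    rcases le_or_gt x xb with hcase | hcase
    · have hanti : AntitoneOn (calPhi a b) (Icc x xb) := by
        apply antitoneOn_of_deriv_nonpos (convex_Icc _ _)
        · intro t ht
          have h0 : 0 < t := lt_of_lt_of_le hx0 ht.1
          have h1 : t < 1 := lt_of_le_of_lt ht.2 hxb1
          exact (hasDerivAt_calPhi a b (by linarith) h1).continuousAt.continuousWithinAt
        · rw [interior_Icc]
          intro t ht
          have h0 : 0 < t := lt_trans hx0 ht.1
          have h1 : t < 1 := lt_trans ht.2 hxb1
          exact (hasDerivAt_calPhi a b (by linarith) h1).differentiableAt.differentiableWithinAt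
        · rw [interior_Icc]
          intro t ht
          have h0 : 0 < t := lt_trans hx0 ht.1
          have h1 : t < 1 := lt_trans ht.2 hxb1
          apply deriv_calPhi_nonpos a b (by linarith) h1 (hLpos t (by linarith))
          rcases le_or_gt t x₁ with hc | hc
          · have hx1pos : 0 ≤ x₁ := le_trans h0.le hc
            have := M2 ⟨le_refl 0, hx1pos⟩ ⟨h0.le, hc⟩ h0.le
            linarith [hpsi0]
          · have hmem_t : t ∈ Icc (max x₁ 0) x₂ :=
              ⟨max_le hc.le h0.le, by linarith [ht.2, hxb2]⟩
            have hmem_b : xb ∈ Icc (max x₁ 0) x₂ := ⟨max_le hxbx1 hxb0, hxb2⟩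
            have := M6 hmem_t hmem_b (by linarith [ht.2])
            linarith [hpsixb]
      have s1 : calG a b x₂ ≤ calG a b xb :=
        M3 ⟨le_refl xb, hxbx2.le⟩ ⟨hxbx2.le, le_refl x₂⟩ hxbx2.le
      have s2 : calG a b xb ≤ calPhi a b xb :=
        calG_le_calPhi a b hxb0 hxb1 (hLpos xb (by linarith)) (le_of_eq hpsixb.symm)
      have s3 : calPhi a b xb ≤ calPhi a b x :=
        hanti ⟨le_refl x, hcase⟩ ⟨hcase, le_refl xb⟩ hcase
      linarith
    · rcases lt_or_ge x x₂ with h2case | h2case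
      · have hpsix : 0 < calPsi a b x := hgt x hcase h2case.le
        have s1 : calG a b x₂ ≤ calG a b x :=
          M3 ⟨hcase.le, h2case.le⟩ ⟨hxbx2.le, le_refl x₂⟩ h2case.le
        have s2 := calG_le_calPhi a b hx0.le hx1 (hLpos x (by linarith)) hpsix.le
        linarith
      · have hpsix : 0 < calPsi a b x := by
          have := M1 ⟨h2case, hx1.le⟩ ⟨hx2lt.le, le_refl 1⟩ hx1
          rw [hpsi1] at this
          exact this
        have s1 : calG a b x₂ ≤ calG a b x := M4 ⟨le_refl x₂, hx2lt⟩ ⟨h2case, hx1⟩ h2case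
        have s2 := calG_le_calPhi a b hx0.le hx1 (hLpos x (by linarith)) hpsix.le
        linarith
  have hGrfl : calG a b x₂ =
      (1 + x₂) ^ (b + 1 / 2) * (1 - x₂) ^ (1 / 2 - a) / (a + b + (a - b) * x₂) := rfl
  rw [ge_iff_le, ← hGrfl]
  have hACpos : 0 < (1 + x) ^ b := Real.rpow_pos_of_pos (by linarith) b
  have hBCpos : 0 < (1 - x) ^ a := Real.rpow_pos_of_pos (by linarith) a
  have hphi : calPhi a b x * ((1 - x) ^ a / (1 + x) ^ b) = Real.arccos x := by
    unfold calPhi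
    field_simp
  calc calG a b x₂ * ((1 - x) ^ a / (1 + x) ^ b)
      ≤ calPhi a b x * ((1 - x) ^ a / (1 + x) ^ b) :=
        mul_le_mul_of_nonneg_right hmain (div_pos hBCpos hACpos).le
    _ = Real.arccos x := hphi
end

section
/- The function F(x) = (2√2 + √(1+x)) / √(1−x) · arccos(x) is strictly decreasing on the interval (0,1). -/
open Real Set

private lemma N_pos {t : ℝ} (ht : t ∈ Set.Ioo 0 (π/2)) :
    0 < 2 * Real.sin t + Real.sin t * Real.cos t - 2*t*Real.cos t - t := by
  set N : ℝ → ℝ := fun t => 2 * Real.sin t + Real.sin t * Real.cos t - 2*t*Real.cos t - t with hN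
  have hder : ∀ s : ℝ, HasDerivAt N
      (2 * Real.cos s + (Real.cos s * Real.cos s + Real.sin s * (-Real.sin s))
        - (2 * Real.cos s + 2*s*(-Real.sin s)) - 1) s := by
    intro s
    have h1 := (Real.hasDerivAt_sin s).const_mul 2
    have h2 := (Real.hasDerivAt_sin s).mul (Real.hasDerivAt_cos s)
    have h3 := ((hasDerivAt_id s).const_mul 2).mul (Real.hasDerivAt_cos s)
    have h4 := hasDerivAt_id s
    have := ((h1.add h2).sub h3).sub h4
    have e : ((fun y => 2 * Real.sin y) + Real.sin * Real.cos - (fun y => 2 * id y) * Real.cos - id) = N := by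
      funext y; simp [hN]
    rw [e] at this
    exact this.congr_deriv (by simp only [id]; ring)
  have hmono : StrictMonoOn N (Set.Icc 0 (π/2)) := by
    apply strictMonoOn_of_deriv_pos (convex_Icc _ _)
    · exact Continuous.continuousOn (by continuity)
    · intro s hs
      rw [interior_Icc] at hs
      rw [(hder s).deriv]
      have hsin : 0 < Real.sin s := Real.sin_pos_of_pos_of_lt_pi hs.1
        (lt_trans hs.2 (by linarith [Real.pi_pos]))
      have hlt : Real.sin s < s := Real.sin_lt hs.1
      have hpy : Real.sin s ^ 2 + Real.cos s ^ 2 = 1 := Real.sin_sq_add_cos_sq s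
      nlinarith [hsin, hlt]
  have h0 : N 0 = 0 := by simp [hN]
  have hpi : (0:ℝ) ≤ π/2 := by positivity
  have := hmono ⟨le_refl 0, hpi⟩ ⟨ht.1.le, ht.2.le⟩ ht.1
  rw [h0] at this
  exact this

private lemma g_mono :
    StrictMonoOn (fun t : ℝ => t * (2 + Real.cos t) / Real.sin t) (Set.Ioo 0 (π/2)) := by
  apply strictMonoOn_of_deriv_pos (convex_Ioo _ _)
  · apply ContinuousOn.div
    · exact Continuous.continuousOn (by continuity)
    · exact Continuous.continuousOn (by continuity)
    · intro s hs
      exact ne_of_gt (Real.sin_pos_of_pos_of_lt_pi hs.1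
        (lt_trans hs.2 (by linarith [Real.pi_pos])))
  · intro s hs
    rw [interior_Ioo] at hs
    have hsin : 0 < Real.sin s := Real.sin_pos_of_pos_of_lt_pi hs.1
      (lt_trans hs.2 (by linarith [Real.pi_pos]))
    have hnum := (hasDerivAt_id s).mul ((hasDerivAt_const s 2).add (Real.hasDerivAt_cos s))
    have hd := hnum.div (Real.hasDerivAt_sin s) (ne_of_gt hsin)
    simp only [id_eq] at hd
    rw [show (fun t : ℝ => t * (2 + Real.cos t) / Real.sin t) = id * ((fun x => 2) + Real.cos) / Real.sin from rfl, hd.deriv]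
    apply div_pos
    · have hN := N_pos hs
      have hpy : Real.sin s ^ 2 + Real.cos s ^ 2 = 1 := Real.sin_sq_add_cos_sq s
      have heq : (1 * (2 + Real.cos s) + s * (0 + -Real.sin s)) * Real.sin s
          - s * (2 + Real.cos s) * Real.cos s
          = 2 * Real.sin s + Real.sin s * Real.cos s - 2*s*Real.cos s - s := by
        linear_combination (-s) * hpy
      simp only [Pi.add_apply, Pi.mul_apply, id]
      rw [heq]
      exact hN
    · positivity

private lemma F_eq {x : ℝ} (hx : x ∈ Set.Ioo (0:ℝ) 1) :
    (2 * Real.sqrt 2 + Real.sqrt (1 + x)) / Real.sqrt (1 - x) * Real.arccos x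
      = 2 * ((Real.arccos x / 2) * (2 + Real.cos (Real.arccos x / 2))
          / Real.sin (Real.arccos x / 2)) := by
  set θ := Real.arccos x with hθ
  have hx1 : (-1:ℝ) ≤ x := by linarith [hx.1]
  have hx2 : x ≤ 1 := hx.2.le
  have hθ0 : 0 < θ := Real.arccos_pos.mpr hx.2
  have hθπ : θ < π / 2 := Real.arccos_lt_pi_div_two.mpr hx.1
  have hcosθ : Real.cos θ = x := Real.cos_arccos hx1 hx2
  have hπ : 0 < π := Real.pi_pos
  have hcos : Real.cos (θ/2) = Real.sqrt ((1 + x)/2) := by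
    rw [← hcosθ]; exact Real.cos_half (by linarith) (by linarith)
  have hsin : Real.sin (θ/2) = Real.sqrt ((1 - x)/2) := by
    rw [← hcosθ]; exact Real.sin_half_eq_sqrt (by linarith) (by linarith)
  have h1x : (0:ℝ) < 1 + x := by linarith [hx.1]
  have h1x' : (0:ℝ) < 1 - x := by linarith [hx.2]
  have h2 : (0:ℝ) < Real.sqrt 2 := Real.sqrt_pos.mpr (by norm_num)
  have hcos' : Real.sqrt 2 * Real.cos (θ/2) = Real.sqrt (1 + x) := by
    rw [hcos, ← Real.sqrt_mul (by norm_num : (0:ℝ) ≤ 2)]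
    ring_nf
  have hsin' : Real.sqrt 2 * Real.sin (θ/2) = Real.sqrt (1 - x) := by
    rw [hsin, ← Real.sqrt_mul (by norm_num : (0:ℝ) ≤ 2)]
    ring_nf
  have hsinpos : 0 < Real.sin (θ/2) := by
    apply Real.sin_pos_of_pos_of_lt_pi <;> [linarith; linarith]
  rw [← hcos', ← hsin']
  field_simp

theorem carlson_arccos_F_strict_anti :
    StrictAntiOn
      (fun x : ℝ => (2 * Real.sqrt 2 + Real.sqrt (1 + x)) / Real.sqrt (1 - x) * Real.arccos x)
      (Set.Ioo 0 1) := by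
  intro x hx y hy hxy
  simp only
  rw [F_eq hx, F_eq hy]
  have hax : Real.arccos x / 2 ∈ Set.Ioo 0 (π/2) := by
    constructor
    · linarith [Real.arccos_pos.mpr hx.2]
    · linarith [Real.arccos_lt_pi_div_two.mpr hx.1, Real.pi_pos]
  have hay : Real.arccos y / 2 ∈ Set.Ioo 0 (π/2) := by
    constructor
    · linarith [Real.arccos_pos.mpr hy.2]
    · linarith [Real.arccos_lt_pi_div_two.mpr hy.1, Real.pi_pos]
  have hlt : Real.arccos y < Real.arccos x := by
    apply Real.strictAntiOn_arccos ⟨by linarith [hx.1], hx.2.le⟩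
      ⟨by linarith [hy.1], hy.2.le⟩ hxy
  have := g_mono hay hax (by linarith)
  linarith
end

section
/- For every x ∈ (0,1), the double inequality 6(1−x)^{1/2} / (2√2 + (1+x)^{1/2}) < arccos(x) < (1/2 + √2)·π·(1−x)^{1/2} / (2√2 + (1+x)^{1/2}) holds. -/
open Real Set

private lemma aux_tan_lt : ∀ u ∈ Set.Ioo (0:ℝ) (π/2), u * Real.cos u < Real.sin u := by
  intro u hu
  have hc : 0 < Real.cos u :=
    Real.cos_pos_of_mem_Ioo ⟨by linarith [Real.pi_pos, hu.1], hu.2⟩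
  have h := Real.lt_tan hu.1 hu.2
  rw [Real.tan_eq_sin_div_cos, lt_div_iff₀ hc] at h
  linarith

private lemma aux_left : ∀ t ∈ Set.Ioo (0:ℝ) (π/4), 3 * Real.sin t < t * (2 + Real.cos t) := by
  have hpi := Real.pi_pos
  -- p t = 2 - 2 cos t - t sin t  is positive on (0, π/4)
  have hp : ∀ t ∈ Set.Ioo (0:ℝ) (π/4), 0 < 2 - 2 * Real.cos t - t * Real.sin t := by
    have hmono : StrictMonoOn (fun u => 2 - 2 * Real.cos u - u * Real.sin u)
        (Set.Icc (0:ℝ) (π/4)) := by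
      apply strictMonoOn_of_deriv_pos (convex_Icc _ _)
      · fun_prop
      · intro u hu
        rw [interior_Icc] at hu
        have hd : HasDerivAt (fun u => 2 - 2 * Real.cos u - u * Real.sin u)
            (Real.sin u - u * Real.cos u) u := by
          have h := (((Real.hasDerivAt_cos u).const_mul 2).const_sub 2).sub
            ((hasDerivAt_id u).mul (Real.hasDerivAt_sin u))
          refine h.congr_deriv ?_
          simp; ring
        rw [hd.deriv]
        have := aux_tan_lt u ⟨hu.1, by linarith [hu.2]⟩
        linarith
    intro t ht
    have := hmono (Set.left_mem_Icc.2 (by linarith)) ⟨ht.1.le, ht.2.le⟩ ht.1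
    simpa using this
  intro t ht
  have hmono : StrictMonoOn (fun u => u * (2 + Real.cos u) - 3 * Real.sin u)
      (Set.Icc (0:ℝ) (π/4)) := by
    apply strictMonoOn_of_deriv_pos (convex_Icc _ _)
    · fun_prop
    · intro u hu
      rw [interior_Icc] at hu
      have hd : HasDerivAt (fun u => u * (2 + Real.cos u) - 3 * Real.sin u)
          (2 - 2 * Real.cos u - u * Real.sin u) u := by
        have h := ((hasDerivAt_id u).mul ((Real.hasDerivAt_cos u).const_add 2)).sub
          ((Real.hasDerivAt_sin u).const_mul 3)
        refine h.congr_deriv ?_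
        simp; ring
      rw [hd.deriv]
      exact hp u hu
  have := hmono (Set.left_mem_Icc.2 (by linarith)) ⟨ht.1.le, ht.2.le⟩ ht.1
  simp only [Real.sin_zero, Real.cos_zero, mul_zero, zero_mul, mul_comm] at this
  nlinarith [this]

private lemma aux_c_gt : (6:ℝ) < (1/2 + Real.sqrt 2) * π := by
  have h1 : (3.141592:ℝ) < π := Real.pi_gt_d6
  have h2 : (1.414213:ℝ) < Real.sqrt 2 := by
    nlinarith [Real.sq_sqrt (by norm_num : (0:ℝ) ≤ 2), Real.sqrt_nonneg 2]
  nlinarith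

private lemma aux_right : ∀ t ∈ Set.Ioo (0:ℝ) (π/4),
    2 * t * (2 + Real.cos t) < (1/2 + Real.sqrt 2) * π * Real.sin t := by
  have hpi := Real.pi_pos
  set c : ℝ := (1/2 + Real.sqrt 2) * π with hc
  have hc6 : (6:ℝ) < c := aux_c_gt
  set f : ℝ → ℝ := fun u => c * Real.sin u - 2 * u * (2 + Real.cos u) with hf
  have hd1 : ∀ u : ℝ, HasDerivAt f (c * Real.cos u - (4 + 2 * Real.cos u - 2 * u * Real.sin u)) u := by
    intro u
    have h := ((Real.hasDerivAt_sin u).const_mul c).sub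
      (((hasDerivAt_id u).const_mul 2).mul ((Real.hasDerivAt_cos u).const_add 2))
    refine h.congr_deriv ?_
    simp; ring
  have hderiv : deriv f = fun u => c * Real.cos u - (4 + 2 * Real.cos u - 2 * u * Real.sin u) :=
    funext fun u => (hd1 u).deriv
  have hconc : StrictConcaveOn ℝ (Set.Icc (0:ℝ) (π/4)) f := by
    apply strictConcaveOn_of_deriv2_neg (convex_Icc _ _)
    · fun_prop
    · intro u hu
      rw [interior_Icc] at hu
      have hd2 : HasDerivAt (fun u => c * Real.cos u - (4 + 2 * Real.cos u - 2 * u * Real.sin u))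
          ((4 - c) * Real.sin u + 2 * u * Real.cos u) u := by
        have h := ((Real.hasDerivAt_cos u).const_mul c).sub
          ((((Real.hasDerivAt_cos u).const_mul 2).const_add 4).sub
            (((hasDerivAt_id u).const_mul 2).mul (Real.hasDerivAt_sin u)))
        refine h.congr_deriv ?_
        simp; ring
      have : deriv^[2] f u = (4 - c) * Real.sin u + 2 * u * Real.cos u := by
        simp only [Function.iterate_succ, Function.iterate_zero, Function.comp_apply, id_eq]
        rw [hderiv, hd2.deriv]
      rw [this]
      have htan := aux_tan_lt u ⟨hu.1, by linarith [hu.2]⟩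
      have hsin : 0 < Real.sin u := Real.sin_pos_of_pos_of_lt_pi hu.1 (by linarith [hu.2])
      nlinarith
  intro t ht
  have hf0 : f 0 = 0 := by simp [hf]
  have hfq : f (π/4) = 0 := by
    have hs2 : Real.sqrt 2 * Real.sqrt 2 = 2 := Real.mul_self_sqrt (by norm_num)
    simp only [hf, Real.sin_pi_div_four, Real.cos_pi_div_four, hc]
    field_simp
    nlinarith [hs2]
  have hab : (1 - t / (π/4)) + t / (π/4) = 1 := by ring
  have ha : 0 < 1 - t / (π/4) := by
    have : t / (π/4) < 1 := (div_lt_one (by linarith)).2 ht.2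
    linarith
  have hb : 0 < t / (π/4) := div_pos ht.1 (by linarith)
  have key := hconc.2 (Set.left_mem_Icc.2 (by linarith)) (Set.right_mem_Icc.2 (by linarith))
    (by linarith : (0:ℝ) < π/4).ne ha hb hab
  have htt : (1 - t/(π/4)) • (0:ℝ) + (t/(π/4)) • (π/4) = t := by
    rw [smul_eq_mul, smul_eq_mul]; field_simp; ring
  rw [htt, hf0, hfq, smul_zero, smul_zero, add_zero] at key
  have : 0 < f t := key
  simp only [hf] at this
  linarith

theorem carlson_arccos_sharp_double_ineq :
    ∀ x ∈ Set.Ioo (0 : ℝ) 1,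
      6 * (1 - x) ^ ((1 : ℝ) / 2) / (2 * Real.sqrt 2 + (1 + x) ^ ((1 : ℝ) / 2)) <
        Real.arccos x ∧
      Real.arccos x <
        (1 / 2 + Real.sqrt 2) * Real.pi * (1 - x) ^ ((1 : ℝ) / 2) /
          (2 * Real.sqrt 2 + (1 + x) ^ ((1 : ℝ) / 2)) := by
  intro x hx
  have hpi := Real.pi_pos
  obtain ⟨hx0, hx1⟩ := hx
  have hθ0 : 0 < Real.arccos x := Real.arccos_pos.2 hx1
  have hθ1 : Real.arccos x < π/2 := Real.arccos_lt_pi_div_two.2 hx0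
  set t := Real.arccos x / 2 with htdef
  have ht : t ∈ Set.Ioo (0:ℝ) (π/4) := ⟨by rw [htdef]; positivity, by rw [htdef]; linarith⟩
  have harc : Real.arccos x = 2 * t := by rw [htdef]; ring
  have hcos2 : Real.cos (2 * t) = x := by
    rw [← harc]; exact Real.cos_arccos (by linarith) hx1.le
  have hsin : 0 < Real.sin t := Real.sin_pos_of_pos_of_lt_pi ht.1 (by linarith [ht.2])
  have hcost : 0 < Real.cos t :=
    Real.cos_pos_of_mem_Ioo ⟨by linarith [ht.1], by linarith [ht.2]⟩
  have hpyth := Real.sin_sq_add_cos_sq t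
  have h2t := Real.cos_two_mul t
  have h1x : 1 - x = 2 * Real.sin t ^ 2 := by rw [← hcos2, h2t]; nlinarith
  have h2x : 1 + x = 2 * Real.cos t ^ 2 := by rw [← hcos2, h2t]; ring
  have hs2 : Real.sqrt 2 * Real.sqrt 2 = 2 := Real.mul_self_sqrt (by norm_num)
  have hs0 : 0 < Real.sqrt 2 := Real.sqrt_pos.2 (by norm_num)
  have heq1 : (1 - x) ^ ((1:ℝ)/2) = Real.sqrt 2 * Real.sin t := by
    rw [← Real.sqrt_eq_rpow, h1x, show (2 : ℝ) * Real.sin t ^ 2 = 2 * Real.sin t ^ 2 from rfl,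
      Real.sqrt_mul (by norm_num : (0:ℝ) ≤ 2), Real.sqrt_sq hsin.le]
  have heq2 : (1 + x) ^ ((1:ℝ)/2) = Real.sqrt 2 * Real.cos t := by
    rw [← Real.sqrt_eq_rpow, h2x, Real.sqrt_mul (by norm_num : (0:ℝ) ≤ 2),
      Real.sqrt_sq hcost.le]
  have hden : 0 < 2 * Real.sqrt 2 + Real.sqrt 2 * Real.cos t := by positivity
  rw [harc, heq1, heq2]
  constructor
  · rw [div_lt_iff₀ hden]
    have h := aux_left t ht
    nlinarith [mul_pos hs0 (sub_pos.2 h)]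
  · rw [lt_div_iff₀ hden]
    have h := aux_right t ht
    nlinarith [mul_pos hs0 (sub_pos.2 h)]
end

section
/- The constants 6 and (1/2 + √2)π in the double inequality 6(1−x)^{1/2}/(2√2 + (1+x)^{1/2}) < arccos(x) < (1/2+√2)π(1−x)^{1/2}/(2√2 + (1+x)^{1/2}) on (0,1) are best possible: if a real constant c satisfies c·(1−x)^{1/2}/(2√2 + (1+x)^{1/2}) < arccos(x) for all x ∈ (0,1), then c ≤ 6; and if a real constant C satisfies arccos(x) < C·(1−x)^{1/2}/(2√2 + (1+x)^{1/2}) for all x ∈ (0,1), then C ≥ (1/2 + √2)π. -/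
open Real Set Filter Topology

lemma tendsto_arccos_div :
    Tendsto (fun x => Real.arccos x / Real.sqrt (1 - x)) (𝓝[<] (1:ℝ)) (𝓝 (Real.sqrt 2)) := by
  have hmem : Set.Ioo (0:ℝ) 1 ∈ 𝓝[<] (1:ℝ) :=
    Ioo_mem_nhdsLT (by norm_num : (0:ℝ) < 1)
  apply HasDerivAt.lhopital_zero_nhdsLT
    (f' := fun x => -(1 / Real.sqrt (1 - x^2)))
    (g' := fun x => 1/(2*Real.sqrt (1-x)) * (-1))
  · filter_upwards [hmem] with x hx
    exact Real.hasDerivAt_arccos (by linarith [hx.1]) (ne_of_lt hx.2)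
  · filter_upwards [hmem] with x hx
    have h1 : (1:ℝ) - x ≠ 0 := by have := hx.2; intro h; linarith [sub_eq_zero.mp h]
    exact (Real.hasDerivAt_sqrt h1).comp x ((hasDerivAt_id x).const_sub 1)
  · filter_upwards [hmem] with x hx
    have h1 : Real.sqrt (1 - x) > 0 := Real.sqrt_pos.mpr (by linarith [hx.2])
    intro h
    have := mul_ne_zero (a := 1/(2*Real.sqrt (1-x))) (b := (-1:ℝ)) (by positivity) (by norm_num)
    exact this h
  · have : Tendsto Real.arccos (𝓝[<] (1:ℝ)) (𝓝 (Real.arccos 1)) :=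
      (Real.continuous_arccos.tendsto 1).mono_left nhdsWithin_le_nhds
    simpa [Real.arccos_one] using this
  · have : Tendsto (fun x : ℝ => Real.sqrt (1 - x)) (𝓝[<] (1:ℝ)) (𝓝 (Real.sqrt (1 - 1))) :=
      ((Real.continuous_sqrt.comp (continuous_const.sub continuous_id)).tendsto 1).mono_left
        nhdsWithin_le_nhds
    simpa using this
  · have heq : ∀ᶠ x in 𝓝[<] (1:ℝ),
        2 / Real.sqrt (1 + x)
          = -(1 / Real.sqrt (1 - x^2)) / (1/(2*Real.sqrt (1-x)) * (-1)) := by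
      filter_upwards [hmem] with x hx
      have h1 : (0:ℝ) < 1 - x := by linarith [hx.2]
      have h2 : (0:ℝ) < 1 + x := by linarith [hx.1]
      have hfac : Real.sqrt (1 - x^2) = Real.sqrt (1-x) * Real.sqrt (1+x) := by
        rw [← Real.sqrt_mul h1.le]; ring_nf
      have hs1 : Real.sqrt (1-x) > 0 := Real.sqrt_pos.mpr h1
      have hs2 : Real.sqrt (1+x) > 0 := Real.sqrt_pos.mpr h2
      field_simp [hfac]
      rw [hfac]; ring
    have hlim : Tendsto (fun x : ℝ => 2 / Real.sqrt (1 + x)) (𝓝[<] (1:ℝ))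
        (𝓝 (2 / Real.sqrt 2)) := by
      have : Tendsto (fun x : ℝ => Real.sqrt (1 + x)) (𝓝[<] (1:ℝ)) (𝓝 (Real.sqrt 2)) := by
        have hc : Continuous (fun x : ℝ => Real.sqrt (1 + x)) :=
          Real.continuous_sqrt.comp (continuous_const.add continuous_id)
        have := (hc.tendsto 1).mono_left (nhdsWithin_le_nhds (s := Set.Iio (1:ℝ)))
        simpa [show (1:ℝ)+1 = 2 by norm_num] using this
      exact tendsto_const_nhds.div this (by positivity)
    have h2s : 2 / Real.sqrt 2 = Real.sqrt 2 := Real.div_sqrt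
    rw [h2s] at hlim
    exact hlim.congr' heq
theorem carlson_arccos_best_constants :
    (∀ c : ℝ,
      (∀ x ∈ Set.Ioo (0 : ℝ) 1,
        c * (1 - x) ^ ((1 : ℝ) / 2) / (2 * Real.sqrt 2 + (1 + x) ^ ((1 : ℝ) / 2)) <
          Real.arccos x) → c ≤ 6) ∧
    (∀ C : ℝ,
      (∀ x ∈ Set.Ioo (0 : ℝ) 1,
        Real.arccos x <
          C * (1 - x) ^ ((1 : ℝ) / 2) / (2 * Real.sqrt 2 + (1 + x) ^ ((1 : ℝ) / 2))) →
        C ≥ (1 / 2 + Real.sqrt 2) * Real.pi) := by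
  have hmem1 : Set.Ioo (0:ℝ) 1 ∈ 𝓝[<] (1:ℝ) :=
    Ioo_mem_nhdsLT (by norm_num : (0:ℝ) < 1)
  have hmem0 : Set.Ioo (0:ℝ) 1 ∈ 𝓝[>] (0:ℝ) :=
    Ioo_mem_nhdsGT (by norm_num : (0:ℝ) < 1)
  have hsqrt2 : (0:ℝ) < Real.sqrt 2 := by positivity
  constructor
  · intro c hc
    -- f x = arccos x * (2√2 + √(1+x)) / √(1-x) → 6 as x → 1⁻, and c < f x on (0,1)
    have hB : Tendsto (fun x : ℝ => 2 * Real.sqrt 2 + Real.sqrt (1 + x)) (𝓝[<] (1:ℝ))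
        (𝓝 (3 * Real.sqrt 2)) := by
      have hc2 : Continuous (fun x : ℝ => 2 * Real.sqrt 2 + Real.sqrt (1 + x)) :=
        continuous_const.add (Real.continuous_sqrt.comp (continuous_const.add continuous_id))
      have := (hc2.tendsto 1).mono_left (nhdsWithin_le_nhds (s := Set.Iio (1:ℝ)))
      have h11 : (2:ℝ) * Real.sqrt 2 + Real.sqrt (1 + 1) = 3 * Real.sqrt 2 := by
        norm_num; ring
      simpa [h11] using this
    have hf : Tendsto (fun x : ℝ =>
        Real.arccos x / Real.sqrt (1 - x) * (2 * Real.sqrt 2 + Real.sqrt (1 + x)))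
        (𝓝[<] (1:ℝ)) (𝓝 6) := by
      have := tendsto_arccos_div.mul hB
      have h6 : Real.sqrt 2 * (3 * Real.sqrt 2) = 6 := by
        have := Real.sq_sqrt (by norm_num : (2:ℝ) ≥ 0)
        nlinarith
      rwa [h6] at this
    refine ge_of_tendsto hf ?_
    filter_upwards [hmem1] with x hx
    have h1 : (0:ℝ) < 1 - x := by linarith [hx.2]
    have h2 : (0:ℝ) < 1 + x := by linarith [hx.1]
    have hs1 : Real.sqrt (1-x) > 0 := Real.sqrt_pos.mpr h1
    have hs2 : Real.sqrt (1+x) > 0 := Real.sqrt_pos.mpr h2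
    have hD : (0:ℝ) < 2 * Real.sqrt 2 + Real.sqrt (1 + x) := by positivity
    have h := hc x hx
    rw [← Real.sqrt_eq_rpow, ← Real.sqrt_eq_rpow] at h
    rw [div_lt_iff₀ hD] at h
    rw [← sub_nonneg]
    have key : Real.arccos x / Real.sqrt (1 - x) * (2 * Real.sqrt 2 + Real.sqrt (1 + x)) - c
        = (Real.arccos x * (2 * Real.sqrt 2 + Real.sqrt (1 + x)) - c * Real.sqrt (1 - x))
            / Real.sqrt (1 - x) := by
      field_simp
    rw [key]
    apply div_nonneg _ hs1.le
    nlinarith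
  · intro C hC
    have h1 : Tendsto Real.arccos (𝓝[>] (0:ℝ)) (𝓝 (π/2)) := by
      have := (Real.continuous_arccos.tendsto 0).mono_left
        (nhdsWithin_le_nhds (s := Set.Ioi (0:ℝ)))
      simpa [Real.arccos_zero] using this
    have h2 : Tendsto (fun x : ℝ =>
        C * Real.sqrt (1 - x) / (2 * Real.sqrt 2 + Real.sqrt (1 + x))) (𝓝[>] (0:ℝ))
        (𝓝 (C / (2 * Real.sqrt 2 + 1))) := by
      have hcnum : Continuous (fun x : ℝ => C * Real.sqrt (1 - x)) :=
        continuous_const.mul (Real.continuous_sqrt.comp (continuous_const.sub continuous_id))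
      have hcden : Continuous (fun x : ℝ => 2 * Real.sqrt 2 + Real.sqrt (1 + x)) :=
        continuous_const.add (Real.continuous_sqrt.comp (continuous_const.add continuous_id))
      have hden0 : (2 * Real.sqrt 2 + Real.sqrt (1 + 0)) ≠ 0 := by
        norm_num; positivity
      have := ((hcnum.tendsto 0).div (hcden.tendsto 0) hden0).mono_left
        (nhdsWithin_le_nhds (s := Set.Ioi (0:ℝ)))
      simpa [Pi.div_def] using this
    have hle : π/2 ≤ C / (2 * Real.sqrt 2 + 1) := by
      refine le_of_tendsto_of_tendsto h1 h2 ?_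
      filter_upwards [hmem0] with x hx
      have h := hC x hx
      rw [← Real.sqrt_eq_rpow, ← Real.sqrt_eq_rpow] at h
      exact h.le
    have hD : (0:ℝ) < 2 * Real.sqrt 2 + 1 := by positivity
    rw [div_le_div_iff₀ (by norm_num) hD] at hle
    have hpi := Real.pi_pos
    nlinarith [hle]
end

section
/- For every x ∈ (0,1), the double inequality π·(1−x)^{1/2} / (2·(1+x)^{1/6}) < arccos(x) < 4^{1/3}·(1−x)^{1/2} / (1+x)^{1/6} holds. -/
open Real Set

lemma aux1 {u : ℝ} (h0 : 0 < u) (h2 : u < π/2) : u * Real.cos u < Real.sin u := by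
  have hc : 0 < Real.cos u := Real.cos_pos_of_mem_Ioo ⟨by linarith, h2⟩
  have := Real.lt_tan h0 h2
  rw [Real.tan_eq_sin_div_cos, lt_div_iff₀ hc] at this
  linarith

lemma aux2 {u : ℝ} (h0 : 0 < u) (h2 : u < π/2) : 0 < 2 - 2*Real.cos u - u * Real.sin u := by
  set g : ℝ → ℝ := fun u => 2 - 2*Real.cos u - u*Real.sin u with hg
  have hd : ∀ v : ℝ, HasDerivAt g (Real.sin v - v * Real.cos v) v := by
    intro v
    have h1 := (Real.hasDerivAt_cos v).const_mul (2:ℝ)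
    have h2' := (hasDerivAt_id v).mul (Real.hasDerivAt_sin v)
    have := ((hasDerivAt_const v (2:ℝ)).sub h1).sub h2'
    exact this.congr_deriv (by simp [id]; ring)
  have hmono : StrictMonoOn g (Icc 0 (π/2)) := by
    apply strictMonoOn_of_deriv_pos (convex_Icc _ _)
    · exact (Continuous.sub (continuous_const.sub (continuous_const.mul Real.continuous_cos))
        (continuous_id.mul Real.continuous_sin)).continuousOn
    · intro v hv
      rw [interior_Icc] at hv
      rw [(hd v).deriv]
      have hc : 0 < Real.cos v := Real.cos_pos_of_mem_Ioo ⟨by linarith [hv.1], hv.2⟩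
      linarith [aux1 hv.1 hv.2]
  have := hmono (left_mem_Icc.mpr (by positivity)) ⟨le_of_lt h0, le_of_lt h2⟩ h0
  simpa [hg] using this

lemma aux3 {u : ℝ} (h0 : 0 < u) (h2 : u < π/2) : 3 * Real.sin u < u * (2 + Real.cos u) := by
  set G : ℝ → ℝ := fun u => u * (2 + Real.cos u) - 3 * Real.sin u with hG
  have hd : ∀ v : ℝ, HasDerivAt G (2 - 2*Real.cos v - v * Real.sin v) v := by
    intro v
    have h1 := (hasDerivAt_id v).mul ((hasDerivAt_const v (2:ℝ)).add (Real.hasDerivAt_cos v))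
    have h2' := (Real.hasDerivAt_sin v).const_mul (3:ℝ)
    have := h1.sub h2'
    exact this.congr_deriv (by simp [id]; ring)
  have hmono : StrictMonoOn G (Icc 0 (π/2)) := by
    apply strictMonoOn_of_deriv_pos (convex_Icc _ _)
    · exact (Continuous.sub (continuous_id.mul (continuous_const.add Real.continuous_cos))
        (continuous_const.mul Real.continuous_sin)).continuousOn
    · intro v hv
      rw [interior_Icc] at hv
      rw [(hd v).deriv]
      exact aux2 hv.1 hv.2
  have := hmono (left_mem_Icc.mpr (by positivity)) ⟨le_of_lt h0, le_of_lt h2⟩ h0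
  simp only [hG, zero_mul, Real.sin_zero, mul_zero, sub_zero, Real.cos_zero] at this
  linarith

noncomputable def Fc : ℝ → ℝ := fun s => Real.log (Real.sin s / s) - (1/3) * Real.log (Real.cos s)

lemma Fc_deriv {s : ℝ} (h0 : 0 < s) (h4 : s < π/4) :
    HasDerivAt Fc (Real.cos s / Real.sin s - 1/s + Real.sin s * (1/3) / Real.cos s) s := by
  have hpi : (0:ℝ) < π := Real.pi_pos
  have hs2 : s < π/2 := by linarith
  have hsin : 0 < Real.sin s := Real.sin_pos_of_pos_of_lt_pi h0 (by linarith)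
  have hcos : 0 < Real.cos s := Real.cos_pos_of_mem_Ioo ⟨by linarith, hs2⟩
  have h1 : HasDerivAt (fun t => Real.log (Real.sin t)) (Real.cos s / Real.sin s) s :=
    (Real.hasDerivAt_sin s).log (ne_of_gt hsin)
  have h2 : HasDerivAt (fun t : ℝ => Real.log t) (1/s) s := by
    simpa [one_div] using Real.hasDerivAt_log (ne_of_gt h0)
  have h3 : HasDerivAt (fun t => (1/3 : ℝ) * Real.log (Real.cos t))
      ((1/3) * (-Real.sin s / Real.cos s)) s :=
    ((Real.hasDerivAt_cos s).log (ne_of_gt hcos)).const_mul _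
  have hF2 : HasDerivAt (fun t => Real.log (Real.sin t) - Real.log t
      - (1/3) * Real.log (Real.cos t))
      (Real.cos s / Real.sin s - 1/s + Real.sin s * (1/3) / Real.cos s) s := by
    have := (h1.sub h2).sub h3
    exact this.congr_deriv (by simp [id]; ring)
  apply hF2.congr_of_eventuallyEq
  have hmem : Ioo (0:ℝ) (π/2) ∈ nhds s := (isOpen_Ioo).mem_nhds ⟨h0, hs2⟩
  filter_upwards [hmem] with t ht
  have hsint : 0 < Real.sin t := Real.sin_pos_of_pos_of_lt_pi ht.1 (by linarith [ht.2])
  simp [Fc, Real.log_div (ne_of_gt hsint) (ne_of_gt ht.1)]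

lemma Fc_deriv_pos {s : ℝ} (h0 : 0 < s) (h4 : s < π/4) :
    0 < Real.cos s / Real.sin s - 1/s + Real.sin s * (1/3) / Real.cos s := by
  have hpi : (0:ℝ) < π := Real.pi_pos
  have hsin : 0 < Real.sin s := Real.sin_pos_of_pos_of_lt_pi h0 (by linarith)
  have hcos : 0 < Real.cos s := Real.cos_pos_of_mem_Ioo ⟨by linarith, by linarith⟩
  have hc := aux3 (u := 2*s) (by linarith) (by linarith)
  rw [Real.sin_two_mul, Real.cos_two_mul] at hc
  have key : 3 * Real.sin s * Real.cos s < s * (3 * Real.cos s ^ 2 + Real.sin s ^ 2) := by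
    nlinarith [Real.sin_sq_add_cos_sq s]
  have heq : Real.cos s / Real.sin s - 1/s + Real.sin s * (1/3) / Real.cos s
      = (s * (3 * Real.cos s ^ 2 + Real.sin s ^ 2) - 3 * Real.sin s * Real.cos s)
        / (3 * s * Real.sin s * Real.cos s) := by
    field_simp; ring
  rw [heq]
  apply div_pos (by linarith) (by positivity)

lemma Fc_cont : ContinuousOn Fc (Icc 0 (π/4)) := by
  have hpi : (0:ℝ) < π := Real.pi_pos
  intro x hx
  rcases eq_or_lt_of_le hx.1 with h | h
  · -- x = 0
    subst h
    rw [← continuousWithinAt_diff_self]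
    unfold ContinuousWithinAt
    have hF0 : Fc 0 = 0 := by simp [Fc]
    rw [hF0]
    have hslope : Filter.Tendsto (fun s => Real.sin s / s) (nhdsWithin 0 {(0:ℝ)}ᶜ) (nhds 1) := by
      have := (Real.hasDerivAt_sin 0)
      rw [hasDerivAt_iff_tendsto_slope] at this
      simp only [slope_fun_def_field, Real.sin_zero, sub_zero, Real.cos_zero] at this
      exact this
    have hle : nhdsWithin (0:ℝ) (Icc 0 (π/4) \ {0}) ≤ nhdsWithin 0 {(0:ℝ)}ᶜ :=
      nhdsWithin_mono _ (fun y hy => hy.2)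
    have h1 : Filter.Tendsto (fun s => Real.log (Real.sin s / s))
        (nhdsWithin (0:ℝ) (Icc 0 (π/4) \ {0})) (nhds 0) := by
      have := (Real.continuousAt_log (by norm_num : (1:ℝ) ≠ 0)).tendsto
      rw [Real.log_one] at this
      exact this.comp (hslope.mono_left hle)
    have h2 : Filter.Tendsto (fun s => (1/3:ℝ) * Real.log (Real.cos s))
        (nhdsWithin (0:ℝ) (Icc 0 (π/4) \ {0})) (nhds 0) := by
      have hc : ContinuousAt (fun s => (1/3:ℝ) * Real.log (Real.cos s)) 0 := by
        apply ContinuousAt.mul continuousAt_const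
        exact (Real.continuousAt_log (by simp)).comp Real.continuous_cos.continuousAt
      have := hc.tendsto
      simp only [Real.cos_zero, Real.log_one, mul_zero] at this
      exact this.mono_left nhdsWithin_le_nhds
    have h3 := h1.sub h2
    rw [sub_zero] at h3
    exact h3
  · -- x > 0
    apply ContinuousWithinAt.sub
    · apply (Real.continuousAt_log ?_).comp ?_ |>.continuousWithinAt
      · have : 0 < Real.sin x := Real.sin_pos_of_pos_of_lt_pi h (by linarith [hx.2])
        positivity
      · exact (Real.continuous_sin.continuousAt).div continuousAt_id (ne_of_gt h)
    · apply ContinuousWithinAt.mul continuousWithinAt_const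
      apply ((Real.continuousAt_log ?_).comp Real.continuous_cos.continuousAt).continuousWithinAt
      have : 0 < Real.cos x := Real.cos_pos_of_mem_Ioo ⟨by linarith, by linarith [hx.2]⟩
      exact ne_of_gt this

lemma Fc_mono : StrictMonoOn Fc (Icc 0 (π/4)) := by
  apply strictMonoOn_of_deriv_pos (convex_Icc _ _) Fc_cont
  intro s hs
  rw [interior_Icc] at hs
  rw [(Fc_deriv hs.1 hs.2).deriv]
  exact Fc_deriv_pos hs.1 hs.2

lemma lemA {s : ℝ} (h0 : 0 < s) (h4 : s < π/4) :
    s * (Real.cos s) ^ ((1:ℝ)/3) < Real.sin s := by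
  have hpi : (0:ℝ) < π := Real.pi_pos
  have hsin : 0 < Real.sin s := Real.sin_pos_of_pos_of_lt_pi h0 (by linarith)
  have hcos : 0 < Real.cos s := Real.cos_pos_of_mem_Ioo ⟨by linarith, by linarith⟩
  have h := Fc_mono (left_mem_Icc.mpr (by positivity))
    (⟨le_of_lt h0, le_of_lt h4⟩ : s ∈ Icc 0 (π/4)) h0
  have hF0 : Fc 0 = 0 := by simp [Fc]
  rw [hF0] at h
  have h' : Real.log ((Real.cos s) ^ ((1:ℝ)/3)) < Real.log (Real.sin s / s) := by
    rw [Real.log_rpow hcos]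
    simp only [Fc] at h
    linarith
  have h2 := Real.exp_lt_exp.mpr h'
  rw [Real.exp_log (by positivity), Real.exp_log (by positivity)] at h2
  rw [lt_div_iff₀ h0] at h2
  linarith

lemma lemB {s : ℝ} (h0 : 0 < s) (h4 : s < π/4) :
    Real.sin s / s / (Real.cos s) ^ ((1:ℝ)/3) < 2 ^ ((5:ℝ)/3) / π := by
  have hpi : (0:ℝ) < π := Real.pi_pos
  have hsin : 0 < Real.sin s := Real.sin_pos_of_pos_of_lt_pi h0 (by linarith)
  have hcos : 0 < Real.cos s := Real.cos_pos_of_mem_Ioo ⟨by linarith, by linarith⟩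
  have h := Fc_mono (⟨le_of_lt h0, le_of_lt h4⟩ : s ∈ Icc 0 (π/4))
    (right_mem_Icc.mpr (by positivity)) h4
  have hsin4 : Real.sin (π/4) = Real.sqrt 2 / 2 := Real.sin_pi_div_four
  have hcos4 : Real.cos (π/4) = Real.sqrt 2 / 2 := Real.cos_pi_div_four
  have hrw : ∀ t : ℝ, 0 < Real.sin t → 0 < t → 0 < Real.cos t →
      Fc t = Real.log (Real.sin t / t / (Real.cos t) ^ ((1:ℝ)/3)) := by
    intro t h1 h2 h3
    rw [Real.log_div (by positivity) (by positivity), Real.log_rpow h3]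
    simp [Fc]
  rw [hrw s hsin h0 hcos, hrw (π/4) (by rw [hsin4]; positivity) (by positivity)
    (by rw [hcos4]; positivity)] at h
  have hlt := Real.exp_lt_exp.mpr h
  rw [Real.exp_log (by positivity),
    Real.exp_log (by rw [hsin4, hcos4]; positivity)] at hlt
  have hval : Real.sin (π/4) / (π/4) / (Real.cos (π/4)) ^ ((1:ℝ)/3) = 2 ^ ((5:ℝ)/3) / π := by
    rw [hsin4, hcos4, Real.sqrt_eq_rpow]
    have e1 : (2:ℝ) ^ ((1:ℝ)/2) / 2 = 2 ^ (-(1:ℝ)/2) := by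
      rw [show (-(1:ℝ)/2) = (1:ℝ)/2 - 1 by norm_num, Real.rpow_sub two_pos, Real.rpow_one]
    rw [e1]
    have e2 : ((2:ℝ) ^ (-(1:ℝ)/2)) ^ ((1:ℝ)/3) = 2 ^ (-(1:ℝ)/6) := by
      rw [← Real.rpow_mul (by norm_num)]; norm_num
    rw [e2]
    have e3 : (2:ℝ) ^ (-(1:ℝ)/2) / 2 ^ (-(1:ℝ)/6) = 2 ^ (-(1:ℝ)/3) := by
      rw [← Real.rpow_sub two_pos]; norm_num
    have e4 : (2:ℝ) ^ ((5:ℝ)/3) = 4 * 2 ^ (-(1:ℝ)/3) := by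
      rw [show ((5:ℝ)/3) = 2 + (-(1:ℝ)/3) by norm_num, Real.rpow_add two_pos]
      norm_num
    rw [e4]
    have e5 : (2:ℝ) ^ (-(1:ℝ)/3) * 2 ^ (-(1:ℝ)/6) = 2 ^ (-(1:ℝ)/2) := by
      rw [← Real.rpow_add two_pos]; norm_num
    rw [div_div, div_eq_div_iff (by positivity) hpi.ne', ← e5]; ring
  rw [hval] at hlt
  exact hlt

theorem carlson_arccos_double_ineq_sixth :
    ∀ x ∈ Set.Ioo (0 : ℝ) 1,
      Real.pi * (1 - x) ^ ((1 : ℝ) / 2) / (2 * (1 + x) ^ ((1 : ℝ) / 6)) < Real.arccos x ∧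
      Real.arccos x < (4 : ℝ) ^ ((1 : ℝ) / 3) * (1 - x) ^ ((1 : ℝ) / 2) /
        (1 + x) ^ ((1 : ℝ) / 6) := by
  intro x hx
  obtain ⟨hx0, hx1⟩ := hx
  have hpi : (0:ℝ) < π := Real.pi_pos
  set t := Real.arccos x with ht
  have ht0 : 0 < t := Real.arccos_pos.mpr hx1
  have ht2 : t < π/2 := Real.arccos_lt_pi_div_two.mpr hx0
  set s := t/2 with hsdef
  have hts : t = 2*s := by rw [hsdef]; ring
  have hs0 : 0 < s := by simp [hsdef]; linarith
  have hs4 : s < π/4 := by rw [hsdef]; linarith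
  have hsin : 0 < Real.sin s := Real.sin_pos_of_pos_of_lt_pi hs0 (by linarith)
  have hcos : 0 < Real.cos s := Real.cos_pos_of_mem_Ioo ⟨by linarith, by linarith⟩
  have hxt : Real.cos t = x := Real.cos_arccos (by linarith) (by linarith)
  have h1x : 1 - x = 2 * Real.sin s ^ 2 := by
    rw [← hxt, hts, Real.cos_two_mul]
    nlinarith [Real.sin_sq_add_cos_sq s]
  have h2x : 1 + x = 2 * Real.cos s ^ 2 := by
    rw [← hxt, hts, Real.cos_two_mul]; ring
  have hr1 : (1 - x) ^ ((1:ℝ)/2) = 2 ^ ((1:ℝ)/2) * Real.sin s := by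
    rw [h1x, Real.mul_rpow (by norm_num) (by positivity)]
    congr 1
    rw [← Real.rpow_natCast (Real.sin s) 2, ← Real.rpow_mul hsin.le]
    norm_num
  have hr2 : (1 + x) ^ ((1:ℝ)/6) = 2 ^ ((1:ℝ)/6) * (Real.cos s) ^ ((1:ℝ)/3) := by
    rw [h2x, Real.mul_rpow (by norm_num) (by positivity)]
    congr 1
    rw [← Real.rpow_natCast (Real.cos s) 2, ← Real.rpow_mul hcos.le]
    norm_num
  have h22 : (2:ℝ) ^ ((2:ℝ)) = 4 := by
    rw [show ((2:ℝ)) = ((2:ℕ):ℝ) by norm_num, Real.rpow_natCast]; norm_num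
  have hp12 : (0:ℝ) < 2 ^ ((1:ℝ)/2) := by positivity
  have hp16 : (0:ℝ) < 2 ^ ((1:ℝ)/6) := by positivity
  have hp13 : (0:ℝ) < (Real.cos s) ^ ((1:ℝ)/3) := by positivity
  constructor
  · -- lower bound
    have hB := lemB hs0 hs4
    rw [div_div, div_lt_div_iff₀ (by positivity) hpi] at hB
    -- hB : sin s * π < 2^(5/3) * (s * cos s^(1/3))
    have epow : (2:ℝ) ^ ((1:ℝ)/2) * 2 ^ ((5:ℝ)/3) = 4 * 2 ^ ((1:ℝ)/6) := by
      rw [← Real.rpow_add two_pos, show (1:ℝ)/2 + 5/3 = 2 + 1/6 by norm_num,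
        Real.rpow_add two_pos, h22]
    rw [hr1, hr2, div_lt_iff₀ (by positivity), hts]
    have h1 := mul_lt_mul_of_pos_left hB hp12
    have h2 : (2:ℝ)^((1:ℝ)/2) * (2^((5:ℝ)/3) * (s * Real.cos s ^ ((1:ℝ)/3)))
        = 2*s*(2*(2^((1:ℝ)/6) * Real.cos s ^((1:ℝ)/3))) := by
      rw [← mul_assoc, epow]; ring
    linarith [h1, h2]
  · -- upper bound
    have hA := lemA hs0 hs4
    have e43 : (4:ℝ) ^ ((1:ℝ)/3) = 2 ^ ((2:ℝ)/3) := by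
      rw [← h22, ← Real.rpow_mul (by norm_num)]; norm_num
    have epow : (2:ℝ) ^ ((2:ℝ)/3) * 2 ^ ((1:ℝ)/2) = 2 * 2 ^ ((1:ℝ)/6) := by
      rw [← Real.rpow_add two_pos, show (2:ℝ)/3 + 1/2 = 1 + 1/6 by norm_num,
        Real.rpow_add two_pos, Real.rpow_one]
    rw [hr1, hr2, lt_div_iff₀ (by positivity), hts, e43]
    have h1 := mul_lt_mul_of_pos_left hA hp16
    have h2 : (2:ℝ)^((2:ℝ)/3) * (2^((1:ℝ)/2) * Real.sin s)
        = 2 * (2^((1:ℝ)/6) * Real.sin s) := by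
      rw [← mul_assoc, epow]; ring
    have h3 := mul_lt_mul_of_pos_left h1 (by norm_num : (0:ℝ) < 2)
    linarith [h2, h3]
end

section
/- For every x ∈ (0,1), the double inequality 4^{1/π}·(1−x)^{1/2} / (1+x)^{(4−π)/(2π)} < arccos(x) < (π/2)·(1−x)^{1/2} / (1+x)^{(4−π)/(2π)} holds. -/
open Real Set Filter

lemma cos_pos_of_le_pi_div_four {v : ℝ} (h0 : 0 < v) (h1 : v ≤ π/4) : 0 < Real.cos v := by
  apply Real.cos_pos_of_mem_Ioo
  constructor
  · linarith [Real.pi_pos]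
  · linarith [Real.pi_pos]

lemma tan_ratio_strict {v w : ℝ} (hv : 0 < v) (hvw : v < w) (hw : w ≤ π/4) :
    Real.tan v / v < Real.tan w / w := by
  have key : StrictMonoOn (fun t => Real.tan t / t) (Icc v w) := by
    apply strictMonoOn_of_deriv_pos (convex_Icc v w)
    · apply ContinuousOn.div
      · apply Real.continuousOn_tan.mono
        intro t ht
        exact ne_of_gt (cos_pos_of_le_pi_div_four (lt_of_lt_of_le hv ht.1) (le_trans ht.2 hw))
      · exact continuousOn_id
      · intro t ht; exact ne_of_gt (lt_of_lt_of_le hv ht.1)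
    · intro t ht
      rw [interior_Icc] at ht
      have ht0 : 0 < t := lt_trans hv ht.1
      have htp : t ≤ π/4 := le_of_lt (lt_of_lt_of_le ht.2 hw)
      have hc : 0 < Real.cos t := cos_pos_of_le_pi_div_four ht0 htp
      have hd : HasDerivAt (fun t => Real.tan t / t)
          ((1 / Real.cos t ^ 2 * t - Real.tan t * 1) / t ^ 2) t :=
        (Real.hasDerivAt_tan hc.ne').div (hasDerivAt_id t) ht0.ne'
      rw [hd.deriv]
      have hs : Real.sin t * Real.cos t < t := by
        have := Real.sin_lt (by linarith : (0:ℝ) < 2*t)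
        rw [Real.sin_two_mul] at this
        nlinarith [Real.neg_one_le_sin t, Real.sin_le_one t, hc]
      rw [Real.tan_eq_sin_div_cos]
      have h1 : 1 / Real.cos t ^ 2 * t - Real.sin t / Real.cos t * 1
          = (t - Real.sin t * Real.cos t) / Real.cos t ^ 2 := by
        field_simp
      rw [h1]
      have hnum : 0 < t - Real.sin t * Real.cos t := by linarith
      exact div_pos (div_pos hnum (by positivity)) (by positivity)
  exact key (left_mem_Icc.2 (le_of_lt hvw)) (right_mem_Icc.2 (le_of_lt hvw)) hvw

lemma crossing : ∃ v0 ∈ Ioo (π/6) (π/4), Real.tan v0 = (π - 2) * v0 := by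
  have hpi1 : 3.141592 < π := Real.pi_gt_d6
  have hpi2 : π < 3.1416 := by linarith [Real.pi_lt_d6]
  have h3 : Real.sqrt 3 < 1.7320509 := by
    rw [show (1.7320509:ℝ) = Real.sqrt (1.7320509^2) by rw [Real.sqrt_sq]; norm_num]
    apply Real.sqrt_lt_sqrt <;> norm_num
  have h3' : (1:ℝ) < Real.sqrt 3 := by
    rw [show (1:ℝ) = Real.sqrt 1 by simp]
    apply Real.sqrt_lt_sqrt <;> norm_num
  have hc6 : Real.tan (π/6) = Real.sqrt 3 / 3 := by
    rw [Real.tan_eq_sin_div_cos, Real.sin_pi_div_six, Real.cos_pi_div_six]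
    rw [div_eq_div_iff (by positivity) (by norm_num)]
    nlinarith [Real.sq_sqrt (by norm_num : (0:ℝ) ≤ 3)]
  have hcont : ContinuousOn (fun v => Real.tan v - (π - 2) * v) (Icc (π/6) (π/4)) := by
    apply ContinuousOn.sub
    · apply Real.continuousOn_tan.mono
      intro t ht
      exact ne_of_gt (cos_pos_of_le_pi_div_four (by simp at ht; linarith [Real.pi_pos, ht.1]) (by simp at ht; linarith [ht.2]))
    · fun_prop
  have hmem : (0:ℝ) ∈ Ioo (Real.tan (π/6) - (π-2)*(π/6)) (Real.tan (π/4) - (π-2)*(π/4)) := by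
    constructor
    · rw [hc6]; nlinarith
    · rw [Real.tan_pi_div_four]; nlinarith
  have := intermediate_value_Ioo (by linarith [Real.pi_pos] : π/6 ≤ π/4) hcont hmem
  obtain ⟨v0, hv0, hv0e⟩ := this
  exact ⟨v0, hv0, by have h := hv0e; simp only at h; linarith⟩

noncomputable def carlsonF (u : ℝ) : ℝ :=
  Real.sin u - (2/π) * u - ((π-2)/π) * (u * Real.cos u)

lemma carlsonF_hasDeriv (u : ℝ) :
    HasDerivAt carlsonF ((2/π) * (Real.cos u - 1) + ((π-2)/π) * (u * Real.sin u)) u := by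
  have d1 : HasDerivAt (fun u : ℝ => (2/π) * u) (2/π) u := by
    simpa using (hasDerivAt_id u).const_mul (2/π)
  have d2 : HasDerivAt (fun u : ℝ => u * Real.cos u) (1 * Real.cos u + u * (-Real.sin u)) u :=
    (hasDerivAt_id u).mul (Real.hasDerivAt_cos u)
  have d3 := d2.const_mul ((π-2)/π)
  have := ((Real.hasDerivAt_sin u).sub d1).sub d3
  convert this using 1 <;> try rfl
  field_simp
  ring

lemma carlsonF_pos : ∀ u ∈ Ioo (0:ℝ) (π/2), 0 < carlsonF u := by
  obtain ⟨v0, hv0mem, hv0eq⟩ := crossing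
  have hpi : (0:ℝ) < π := Real.pi_pos
  have hv0pos : 0 < v0 := lt_trans (by positivity) hv0mem.1
  have hv0lt : v0 < π/4 := hv0mem.2
  have hratio : Real.tan v0 / v0 = π - 2 := by
    rw [hv0eq]; field_simp
  -- derivative sign
  have dpos : ∀ u ∈ Ioo (0:ℝ) (2*v0), 0 < deriv carlsonF u := by
    intro u hu
    rw [(carlsonF_hasDeriv u).deriv]
    set v := u/2 with hv
    have hvpos : 0 < v := by simp [hv]; linarith [hu.1]
    have hvlt : v < v0 := by simp [hv]; linarith [hu.2]
    have htan : Real.tan v / v < π - 2 := by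
      rw [← hratio]; exact tan_ratio_strict hvpos hvlt (le_of_lt hv0lt)
    have hcv : 0 < Real.cos v := cos_pos_of_le_pi_div_four hvpos (by linarith)
    have hsv : 0 < Real.sin v := Real.sin_pos_of_pos_of_lt_pi hvpos (by linarith)
    have hkey : Real.sin v < (π - 2) * v * Real.cos v := by
      rw [div_lt_iff₀ hvpos, Real.tan_eq_sin_div_cos, div_lt_iff₀ hcv] at htan
      nlinarith [htan]
    have hu2 : u = 2 * v := by rw [hv]; ring
    rw [hu2, Real.cos_two_mul, Real.sin_two_mul]
    have hpy := Real.sin_sq_add_cos_sq v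
    have h1 : (2/π) * ((2 * Real.cos v ^ 2 - 1) - 1) + ((π-2)/π) * ((2*v) * (2 * Real.sin v * Real.cos v))
        = (4 * Real.sin v / π) * ((π - 2) * v * Real.cos v - Real.sin v) := by
      field_simp
      nlinarith [hpy]
    rw [h1]
    apply mul_pos (by positivity) (by linarith)
  have dneg : ∀ u ∈ Ioo (2*v0) (π/2), deriv carlsonF u < 0 := by
    intro u hu
    rw [(carlsonF_hasDeriv u).deriv]
    set v := u/2 with hv
    have hvpos : 0 < v := by simp [hv]; linarith [hu.1]
    have hvgt : v0 < v := by simp [hv]; linarith [hu.1]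
    have hvlt : v < π/4 := by simp [hv]; linarith [hu.2]
    have htan : π - 2 < Real.tan v / v := by
      rw [← hratio]; exact tan_ratio_strict hv0pos hvgt (le_of_lt hvlt)
    have hcv : 0 < Real.cos v := cos_pos_of_le_pi_div_four hvpos (le_of_lt hvlt)
    have hsv : 0 < Real.sin v := Real.sin_pos_of_pos_of_lt_pi hvpos (by linarith)
    have hkey : (π - 2) * v * Real.cos v < Real.sin v := by
      rw [lt_div_iff₀ hvpos, Real.tan_eq_sin_div_cos, lt_div_iff₀ hcv] at htan
      nlinarith [htan]
    have hu2 : u = 2 * v := by rw [hv]; ring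
    rw [hu2, Real.cos_two_mul, Real.sin_two_mul]
    have hpy := Real.sin_sq_add_cos_sq v
    have h1 : (2/π) * ((2 * Real.cos v ^ 2 - 1) - 1) + ((π-2)/π) * ((2*v) * (2 * Real.sin v * Real.cos v))
        = (4 * Real.sin v / π) * ((π - 2) * v * Real.cos v - Real.sin v) := by
      field_simp
      nlinarith [hpy]
    rw [h1]
    have : (π - 2) * v * Real.cos v - Real.sin v < 0 := by linarith
    exact mul_neg_of_pos_of_neg (by positivity) this
  have hcont : Continuous carlsonF := by
    unfold carlsonF; continuity
  have hF0 : carlsonF 0 = 0 := by simp [carlsonF]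
  have hFpi2 : carlsonF (π/2) = 0 := by
    simp [carlsonF, Real.sin_pi_div_two, Real.cos_pi_div_two]
  have hmono : StrictMonoOn carlsonF (Icc 0 (2*v0)) := by
    apply strictMonoOn_of_deriv_pos (convex_Icc _ _) hcont.continuousOn
    rw [interior_Icc]; exact dpos
  have hanti : StrictAntiOn carlsonF (Icc (2*v0) (π/2)) := by
    apply strictAntiOn_of_deriv_neg (convex_Icc _ _) hcont.continuousOn
    rw [interior_Icc]; exact dneg
  intro u hu
  rcases le_or_gt u (2*v0) with h | h
  · have := hmono (left_mem_Icc.2 (by linarith)) ⟨le_of_lt hu.1, h⟩ hu.1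
    rwa [hF0] at this
  · have := hanti ⟨le_of_lt h, by linarith [hu.2]⟩ (right_mem_Icc.2 (by linarith)) hu.2
    rwa [hFpi2] at this

lemma carlsonF_pos' : ∀ u ∈ Ioo (0:ℝ) (π/2),
    0 < Real.sin u - (2/π) * u - ((π-2)/π) * (u * Real.cos u) := by
  intro u hu
  have := carlsonF_pos u hu
  unfold carlsonF at this
  exact this

noncomputable def carlsonH (θ : ℝ) : ℝ :=
  Real.log θ + ((4-π)/π) * Real.log (Real.cos (θ/2)) - Real.log (Real.sin (θ/2))

lemma carlsonH_mono : StrictMonoOn carlsonH (Ioc 0 (π/2)) := by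
  have hpi : (0:ℝ) < π := Real.pi_pos
  apply strictMonoOn_of_deriv_pos (convex_Ioc _ _)
  · intro x hx
    have hx0 : 0 < x := hx.1
    have hx2 : x ≤ π/2 := hx.2
    have hcv : 0 < Real.cos (x/2) := by
      apply Real.cos_pos_of_mem_Ioo; constructor <;> [linarith; linarith]
    have hsv : 0 < Real.sin (x/2) := Real.sin_pos_of_pos_of_lt_pi (by linarith) (by linarith)
    apply ContinuousAt.continuousWithinAt
    have c1 : ContinuousAt Real.log x := Real.continuousAt_log hx0.ne'
    have c2 : ContinuousAt (fun t : ℝ => Real.log (Real.cos (t/2))) x := by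
      have hin : ContinuousAt (fun t : ℝ => Real.cos (t/2)) x := by fun_prop
      exact hin.log hcv.ne'
    have c3 : ContinuousAt (fun t : ℝ => Real.log (Real.sin (t/2))) x := by
      have hin : ContinuousAt (fun t : ℝ => Real.sin (t/2)) x := by fun_prop
      exact hin.log hsv.ne'
    exact (c1.add (c2.const_mul _)).sub c3
  · rw [interior_Ioc]
    intro θ hθ
    have hθ0 : 0 < θ := hθ.1
    have hθ2 : θ < π/2 := hθ.2
    have hcv : 0 < Real.cos (θ/2) := by
      apply Real.cos_pos_of_mem_Ioo; constructor <;> [linarith; linarith]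
    have hsv : 0 < Real.sin (θ/2) := Real.sin_pos_of_pos_of_lt_pi (by linarith) (by linarith)
    have dhalf : HasDerivAt (fun t : ℝ => t/2) (1/2 : ℝ) θ := by
      simpa using (hasDerivAt_id θ).div_const 2
    have dcos : HasDerivAt (fun t : ℝ => Real.cos (t/2)) (-Real.sin (θ/2) * (1/2)) θ :=
      (Real.hasDerivAt_cos (θ/2)).comp (h := fun t : ℝ => t/2) θ dhalf
    have dsin : HasDerivAt (fun t : ℝ => Real.sin (t/2)) (Real.cos (θ/2) * (1/2)) θ :=
      (Real.hasDerivAt_sin (θ/2)).comp (h := fun t : ℝ => t/2) θ dhalf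
    have dlogcos : HasDerivAt (fun t : ℝ => Real.log (Real.cos (t/2)))
        ((Real.cos (θ/2))⁻¹ * (-Real.sin (θ/2) * (1/2))) θ :=
      (Real.hasDerivAt_log hcv.ne').comp (h := fun t : ℝ => Real.cos (t/2)) θ dcos
    have dlogsin : HasDerivAt (fun t : ℝ => Real.log (Real.sin (t/2)))
        ((Real.sin (θ/2))⁻¹ * (Real.cos (θ/2) * (1/2))) θ :=
      (Real.hasDerivAt_log hsv.ne').comp (h := fun t : ℝ => Real.sin (t/2)) θ dsin
    have dH : HasDerivAt carlsonH
        (θ⁻¹ + ((4-π)/π) * ((Real.cos (θ/2))⁻¹ * (-Real.sin (θ/2) * (1/2)))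
          - (Real.sin (θ/2))⁻¹ * (Real.cos (θ/2) * (1/2))) θ := by
      exact ((Real.hasDerivAt_log hθ0.ne').add (dlogcos.const_mul _)).sub dlogsin
    rw [dH.deriv]
    have hF := carlsonF_pos' θ ⟨hθ0, hθ2⟩
    have hs2 : Real.sin θ = 2 * Real.sin (θ/2) * Real.cos (θ/2) := by
      rw [show θ = 2*(θ/2) by ring, Real.sin_two_mul]; ring_nf
    have hc2 : Real.cos θ = 2 * Real.cos (θ/2)^2 - 1 := by
      rw [show θ = 2*(θ/2) by ring, Real.cos_two_mul]; ring_nf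
    rw [hs2, hc2] at hF
    have hpy := Real.sin_sq_add_cos_sq (θ/2)
    have hD : (0:ℝ) < 2 * θ * Real.sin (θ/2) * Real.cos (θ/2) := by positivity
    have hN2 : 0 < 2 * Real.sin (θ/2) * Real.cos (θ/2) - ((4-π)/π) * θ * Real.sin (θ/2)^2
        - θ * Real.cos (θ/2)^2 := by
      have e : 2 * Real.sin (θ/2) * Real.cos (θ/2) - ((4-π)/π) * θ * Real.sin (θ/2)^2
            - θ * Real.cos (θ/2)^2
          = 2 * Real.sin (θ/2) * Real.cos (θ/2) - 2/π * θ
            - (π-2)/π * (θ * (2 * Real.cos (θ/2)^2 - 1))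
            + ((4-π)/π) * θ * (1 - Real.sin (θ/2)^2 - Real.cos (θ/2)^2) := by
        field_simp
        ring
      have h0 : 1 - Real.sin (θ/2)^2 - Real.cos (θ/2)^2 = 0 := by linarith
      rw [e, h0, mul_zero]
      linarith [hF]
    have hkey : θ⁻¹ + ((4-π)/π) * ((Real.cos (θ/2))⁻¹ * (-Real.sin (θ/2) * (1/2)))
          - (Real.sin (θ/2))⁻¹ * (Real.cos (θ/2) * (1/2))
        = (2 * Real.sin (θ/2) * Real.cos (θ/2) - ((4-π)/π) * θ * Real.sin (θ/2)^2
            - θ * Real.cos (θ/2)^2) / (2 * θ * Real.sin (θ/2) * Real.cos (θ/2)) := by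
      rw [eq_div_iff hD.ne']
      field_simp
      ring
    rw [hkey]
    exact div_pos hN2 hD

lemma sin_div_tendsto : Tendsto (fun x : ℝ => Real.sin x / x) (nhdsWithin 0 {(0:ℝ)}ᶜ) (nhds 1) := by
  have h := Real.hasDerivAt_sin 0
  rw [hasDerivAt_iff_tendsto_slope] at h
  simp only [Real.cos_zero] at h
  apply h.congr
  intro x
  simp [slope_def_field]

lemma carlsonH_tendsto : Tendsto carlsonH (nhdsWithin 0 (Ioi (0:ℝ))) (nhds (Real.log 2)) := by
  have hpi : (0:ℝ) < π := Real.pi_pos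
  have hmap : Tendsto (fun θ : ℝ => θ/2) (nhdsWithin 0 (Ioi (0:ℝ))) (nhdsWithin 0 {(0:ℝ)}ᶜ) := by
    apply tendsto_nhdsWithin_of_tendsto_nhds_of_eventually_within
    · have hb : Tendsto (fun θ : ℝ => θ/2) (nhds (0:ℝ)) (nhds ((0:ℝ)/2)) :=
        (continuous_id.div_const (2:ℝ)).tendsto (0:ℝ)
      rw [show (0:ℝ)/2 = 0 by norm_num] at hb
      exact hb.mono_left nhdsWithin_le_nhds
    · filter_upwards [self_mem_nhdsWithin] with θ hθ
      simp only [mem_compl_iff, mem_singleton_iff]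
      have : (0:ℝ) < θ := hθ
      positivity
  have t2 : Tendsto (fun x : ℝ => x / Real.sin x) (nhdsWithin 0 {(0:ℝ)}ᶜ) (nhds 1) := by
    have := sin_div_tendsto.inv₀ one_ne_zero
    simp only [inv_one] at this
    apply this.congr
    intro x
    rw [inv_div]
  have t3 : Tendsto (fun θ : ℝ => θ / Real.sin (θ/2)) (nhdsWithin 0 (Ioi (0:ℝ))) (nhds 2) := by
    have comp := Filter.Tendsto.const_mul (2:ℝ) (t2.comp hmap)
    simp only [mul_one] at comp
    apply comp.congr
    intro θ
    simp only [Function.comp]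
    ring
  have t4 : Tendsto (fun θ : ℝ => Real.log (θ / Real.sin (θ/2)))
      (nhdsWithin 0 (Ioi (0:ℝ))) (nhds (Real.log 2)) :=
    (Real.continuousAt_log two_ne_zero).tendsto.comp t3
  have t6 : Tendsto (fun θ : ℝ => ((4-π)/π) * Real.log (Real.cos (θ/2)))
      (nhdsWithin 0 (Ioi (0:ℝ))) (nhds 0) := by
    have hca : ContinuousAt (fun θ : ℝ => ((4-π)/π) * Real.log (Real.cos (θ/2))) 0 := by
      have hin : ContinuousAt (fun θ : ℝ => Real.cos (θ/2)) 0 := by fun_prop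
      have hlog := hin.log (by norm_num)
      exact continuousAt_const.mul hlog
    have := hca.tendsto.mono_left (nhdsWithin_le_nhds (s := Ioi (0:ℝ)))
    simpa using this
  have hsum := t4.add t6
  rw [add_zero] at hsum
  apply hsum.congr'
  filter_upwards [Ioo_mem_nhdsGT_of_mem (⟨le_refl 0, hpi⟩ : (0:ℝ) ∈ Ico (0:ℝ) π)] with θ hθ
  have hθ0 : 0 < θ := hθ.1
  have hsv : 0 < Real.sin (θ/2) := Real.sin_pos_of_pos_of_lt_pi (by linarith [hθ.2]) (by linarith [hθ.2])
  unfold carlsonH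
  rw [Real.log_div hθ0.ne' hsv.ne']
  ring

lemma carlsonH_exp {θ : ℝ} (hθ0 : 0 < θ) (hθ2 : θ ≤ π/2) :
    Real.exp (carlsonH θ) = θ * (Real.cos (θ/2)) ^ ((4-π)/π) / Real.sin (θ/2) := by
  have hpi : (0:ℝ) < π := Real.pi_pos
  have hcv : 0 < Real.cos (θ/2) := by
    apply Real.cos_pos_of_mem_Ioo; constructor <;> [linarith; linarith]
  have hsv : 0 < Real.sin (θ/2) := Real.sin_pos_of_pos_of_lt_pi (by linarith) (by linarith)
  unfold carlsonH
  rw [Real.exp_sub, Real.exp_add, Real.exp_log hθ0, Real.exp_log hsv,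
    Real.rpow_def_of_pos hcv, mul_comm ((4-π)/π) (Real.log (Real.cos (θ/2)))]

lemma carlsonH_gt_log2 : ∀ θ ∈ Ioc (0:ℝ) (π/2), Real.log 2 < carlsonH θ := by
  intro θ hθ
  have hpi : (0:ℝ) < π := Real.pi_pos
  have hmem : θ/2 ∈ Ioc (0:ℝ) (π/2) := ⟨by linarith [hθ.1], by linarith [hθ.2]⟩
  have h1 : carlsonH (θ/2) < carlsonH θ := carlsonH_mono hmem hθ (by linarith [hθ.1])
  have h2 : Real.log 2 ≤ carlsonH (θ/2) := by
    apply le_of_tendsto carlsonH_tendsto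
    filter_upwards [Ioo_mem_nhdsGT_of_mem (⟨le_refl 0, hmem.1⟩ : (0:ℝ) ∈ Ico (0:ℝ) (θ/2))] with t ht
    exact le_of_lt (carlsonH_mono ⟨ht.1, by linarith [ht.2, hmem.2]⟩ hmem ht.2)
  linarith

theorem carlson_arccos_double_ineq_pi_exponent :
    ∀ x ∈ Set.Ioo (0 : ℝ) 1,
      (4 : ℝ) ^ (1 / Real.pi) * (1 - x) ^ ((1 : ℝ) / 2) /
          (1 + x) ^ ((4 - Real.pi) / (2 * Real.pi)) < Real.arccos x ∧
      Real.arccos x < Real.pi / 2 * (1 - x) ^ ((1 : ℝ) / 2) /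
          (1 + x) ^ ((4 - Real.pi) / (2 * Real.pi)) := by
  intro x hx
  have hpi : (0:ℝ) < π := Real.pi_pos
  set θ := Real.arccos x with hθdef
  have hθ0 : 0 < θ := Real.arccos_pos.2 hx.2
  have hθ2 : θ < π/2 := Real.arccos_lt_pi_div_two.2 hx.1
  have hxcos : Real.cos θ = x := Real.cos_arccos (by linarith [hx.1]) (le_of_lt hx.2)
  set v := θ/2 with hvdef
  have hcv : 0 < Real.cos v := by
    apply Real.cos_pos_of_mem_Ioo
    constructor
    · simp only [hvdef]; linarith
    · simp only [hvdef]; linarith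
  have hsv : 0 < Real.sin v := by
    apply Real.sin_pos_of_pos_of_lt_pi
    · simp only [hvdef]; linarith
    · simp only [hvdef]; linarith
  have hpy := Real.sin_sq_add_cos_sq v
  have hc2 : Real.cos θ = 2 * Real.cos v ^ 2 - 1 := by
    rw [show θ = 2*v by rw [hvdef]; ring, Real.cos_two_mul]
  have h1mx : 1 - x = 2 * Real.sin v ^ 2 := by
    rw [← hxcos, hc2]; nlinarith [hpy]
  have h1px : 1 + x = 2 * Real.cos v ^ 2 := by
    rw [← hxcos, hc2]; ring
  set E : ℝ := (4-π)/π with hEdef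
  set a : ℝ := (4-π)/(2*π) with hadef
  have hE2a : E = 2 * a := by rw [hEdef, hadef]; field_simp
  -- rpow conversions
  have e1 : (1 - x) ^ ((1:ℝ)/2) = 2 ^ ((1:ℝ)/2) * Real.sin v := by
    rw [h1mx, Real.mul_rpow (by norm_num) (by positivity)]
    congr 1
    rw [← Real.rpow_natCast (Real.sin v) 2, ← Real.rpow_mul hsv.le]
    norm_num
  have e2 : (1 + x) ^ a = 2 ^ a * Real.cos v ^ E := by
    rw [h1px, Real.mul_rpow (by norm_num) (by positivity)]
    congr 1
    rw [← Real.rpow_natCast (Real.cos v) 2, ← Real.rpow_mul hcv.le, hE2a]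
    norm_num
  -- bounds from monotonicity
  have hginv : Real.exp (carlsonH θ) = θ * Real.cos v ^ E / Real.sin v := by
    rw [carlsonH_exp hθ0 (le_of_lt hθ2)]
  have hlow : 2 < θ * Real.cos v ^ E / Real.sin v := by
    rw [← hginv]
    have := carlsonH_gt_log2 θ ⟨hθ0, le_of_lt hθ2⟩
    calc (2:ℝ) = Real.exp (Real.log 2) := (Real.exp_log (by norm_num)).symm
      _ < Real.exp (carlsonH θ) := Real.exp_lt_exp.2 this
  have hupp : θ * Real.cos v ^ E / Real.sin v < π/2 * (2:ℝ) ^ ((1:ℝ)/2) / 2 ^ a := by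
    have hmono := carlsonH_mono ⟨hθ0, le_of_lt hθ2⟩ (right_mem_Ioc.2 (by linarith)) hθ2
    have hexp := Real.exp_lt_exp.2 hmono
    rw [hginv] at hexp
    have hval : Real.exp (carlsonH (π/2)) = π/2 * (2:ℝ) ^ ((1:ℝ)/2) / 2 ^ a := by
      rw [carlsonH_exp (by linarith) (le_refl _)]
      rw [show π/2/2 = π/4 by ring, Real.cos_pi_div_four, Real.sin_pi_div_four]
      rw [Real.sqrt_eq_rpow]
      have hhalf : (2:ℝ) ^ ((1:ℝ)/2) / 2 = (2:ℝ) ^ (-(1:ℝ)/2) := by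
        rw [show (-(1:ℝ)/2) = (1:ℝ)/2 - 1 by ring, Real.rpow_sub (by norm_num), Real.rpow_one]
      rw [hhalf, ← Real.rpow_mul (by norm_num : (0:ℝ) ≤ 2)]
      rw [div_eq_div_iff (by positivity) (by positivity), mul_assoc, mul_assoc,
        ← Real.rpow_add (by norm_num : (0:ℝ) < 2), ← Real.rpow_add (by norm_num : (0:ℝ) < 2)]
      congr 1
      congr 1
      rw [hadef]
      field_simp
      ring
    rw [← hval]
    exact hexp
  constructor
  · -- lower bound
    rw [e1, e2]
    have hconst : (4:ℝ) ^ (1/π) * (2 ^ ((1:ℝ)/2)) / 2 ^ a = 2 := by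
      have h4 : (4:ℝ) ^ (1/π) = 2 ^ (2/π) := by
        rw [show (4:ℝ) = 2 ^ (2:ℝ) by
          rw [show (2:ℝ) = ((2:ℕ):ℝ) by norm_num, Real.rpow_natCast]; norm_num]
        rw [← Real.rpow_mul (by norm_num : (0:ℝ) ≤ 2)]
        congr 1
        ring
      rw [h4, ← Real.rpow_add (by norm_num : (0:ℝ) < 2), ← Real.rpow_sub (by norm_num : (0:ℝ) < 2)]
      rw [show 2/π + (1:ℝ)/2 - a = 1 by rw [hadef]; field_simp; ring]
      exact Real.rpow_one 2
    have hsplit : (4:ℝ) ^ (1/π) * (2 ^ ((1:ℝ)/2) * Real.sin v) / (2 ^ a * Real.cos v ^ E)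
        = ((4:ℝ) ^ (1/π) * (2 ^ ((1:ℝ)/2)) / 2 ^ a) * (Real.sin v / Real.cos v ^ E) := by
      field_simp
    rw [hsplit, hconst]
    have hcE : (0:ℝ) < Real.cos v ^ E := Real.rpow_pos_of_pos hcv E
    rw [lt_div_iff₀ hsv] at hlow
    rw [show (2:ℝ) * (Real.sin v / Real.cos v ^ E) = 2 * Real.sin v / Real.cos v ^ E by ring,
      div_lt_iff₀ hcE]
    linarith [hlow]
  · -- upper bound
    rw [e1, e2]
    have hcE : (0:ℝ) < Real.cos v ^ E := Real.rpow_pos_of_pos hcv E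
    have hsplit : π/2 * (2 ^ ((1:ℝ)/2) * Real.sin v) / (2 ^ a * Real.cos v ^ E)
        = (π/2 * (2:ℝ) ^ ((1:ℝ)/2) / 2 ^ a) * (Real.sin v / Real.cos v ^ E) := by
      field_simp
    rw [hsplit]
    rw [div_lt_iff₀ hsv] at hupp
    have hgoal : θ * Real.cos v ^ E < (π/2 * (2:ℝ) ^ ((1:ℝ)/2) / 2 ^ a) * Real.sin v := hupp
    calc θ = θ * Real.cos v ^ E / Real.cos v ^ E := by
          rw [mul_div_cancel_right₀ _ hcE.ne']
      _ < (π/2 * (2:ℝ) ^ ((1:ℝ)/2) / 2 ^ a * Real.sin v) / Real.cos v ^ E := by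
          exact div_lt_div_of_pos_right hgoal hcE
      _ = π/2 * 2 ^ ((1:ℝ)/2) / 2 ^ a * (Real.sin v / Real.cos v ^ E) := by ring
end

section
/- For every x ∈ [0,1), the inequality arccos(x) > 3x·√(1−x²) / (1 + 2x²) holds. -/
open Real Set

lemma aux_sin_gt (θ : ℝ) (h0 : 0 < θ) (h1 : θ ≤ π) : θ * Real.cos θ < Real.sin θ := by
  rcases lt_or_ge θ (π/2) with h | h
  · have hc : 0 < Real.cos θ := Real.cos_pos_of_mem_Ioo ⟨by linarith [Real.pi_pos], h⟩
    have ht := Real.lt_tan h0 h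
    rw [Real.tan_eq_sin_div_cos, lt_div_iff₀ hc] at ht
    linarith
  · rcases lt_or_eq_of_le h1 with h1' | h1'
    · have hs : 0 < Real.sin θ := Real.sin_pos_of_pos_of_lt_pi h0 h1'
      have hc : Real.cos θ ≤ 0 := Real.cos_nonpos_of_pi_div_two_le_of_le h (by linarith)
      nlinarith
    · subst h1'; simp [Real.cos_pi, Real.sin_pi]; positivity

lemma aux_g1 (θ : ℝ) (h0 : 0 < θ) (h1 : θ ≤ π) :
    0 < 2 - 2 * Real.cos θ - θ * Real.sin θ := by
  have hmono : StrictMonoOn (fun t => 2 - 2 * Real.cos t - t * Real.sin t) (Set.Icc 0 π) := by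
    apply strictMonoOn_of_deriv_pos (convex_Icc 0 π)
    · fun_prop
    · intro t ht
      rw [interior_Icc] at ht
      have hd : HasDerivAt (fun t => 2 - 2 * Real.cos t - t * Real.sin t)
          (Real.sin t - t * Real.cos t) t := by
        have := ((hasDerivAt_const t (2:ℝ)).sub ((Real.hasDerivAt_cos t).const_mul 2)).sub
          ((hasDerivAt_id t).mul (Real.hasDerivAt_sin t))
        exact this.congr_deriv (by simp; ring)
      rw [hd.deriv]
      linarith [aux_sin_gt t ht.1 ht.2.le]
  have := hmono (Set.mem_Icc.mpr ⟨le_refl 0, Real.pi_pos.le⟩)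
    (Set.mem_Icc.mpr ⟨h0.le, h1⟩) h0
  simpa using this

lemma cusa (θ : ℝ) (h0 : 0 < θ) (h1 : θ ≤ π) :
    3 * Real.sin θ < θ * (2 + Real.cos θ) := by
  have hmono : StrictMonoOn (fun t => t * (2 + Real.cos t) - 3 * Real.sin t) (Set.Icc 0 π) := by
    apply strictMonoOn_of_deriv_pos (convex_Icc 0 π)
    · fun_prop
    · intro t ht
      rw [interior_Icc] at ht
      have hd : HasDerivAt (fun t => t * (2 + Real.cos t) - 3 * Real.sin t)
          (2 - 2 * Real.cos t - t * Real.sin t) t := by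
        have := ((hasDerivAt_id t).mul ((hasDerivAt_const t (2:ℝ)).add (Real.hasDerivAt_cos t))).sub
          ((Real.hasDerivAt_sin t).const_mul 3)
        exact this.congr_deriv (by simp; ring)
      rw [hd.deriv]
      exact aux_g1 t ht.1 ht.2.le
  have := hmono (Set.mem_Icc.mpr ⟨le_refl 0, Real.pi_pos.le⟩)
    (Set.mem_Icc.mpr ⟨h0.le, h1⟩) h0
  simp only [zero_mul, Real.sin_zero, mul_zero, sub_zero, zero_sub] at this
  linarith

theorem arccos_gt_three_x_sqrt :
    ∀ x ∈ Set.Ico (0 : ℝ) 1,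
      Real.arccos x > 3 * x * Real.sqrt (1 - x ^ 2) / (1 + 2 * x ^ 2) := by
  intro x hx
  obtain ⟨hx0, hx1⟩ := hx
  set θ := Real.arccos x with hθ
  have hθ0 : 0 < θ := Real.arccos_pos.mpr hx1
  have hθ2 : θ ≤ π / 2 := Real.arccos_le_pi_div_two.mpr hx0
  have hcos : Real.cos θ = x := Real.cos_arccos (by linarith) hx1.le
  have hsin : Real.sin θ = Real.sqrt (1 - x ^ 2) := Real.sin_arccos x
  have hc := cusa (2 * θ) (by linarith) (by linarith)
  rw [Real.sin_two_mul, Real.cos_two_mul, hcos, hsin] at hc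
  have hden : (0:ℝ) < 1 + 2 * x ^ 2 := by positivity
  rw [gt_iff_lt, div_lt_iff₀ hden]
  nlinarith
end

section
/- For every x ∈ [0,1), the inequality (arccos x)² + x·√(1−x²)·arccos(x) + 2x² − 2 > 0 holds. -/
open Real Set

lemma nonneg_of_hasDerivAt (f f' : ℝ → ℝ) (h0 : f 0 = 0)
    (hd : ∀ y : ℝ, HasDerivAt f (f' y) y)
    (hp : ∀ y : ℝ, 0 ≤ y → 0 ≤ f' y) : ∀ y : ℝ, 0 ≤ y → 0 ≤ f y := by
  intro y hy
  have hdiff : Differentiable ℝ f := fun z => (hd z).differentiableAt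
  have hm : MonotoneOn f (Ici (0:ℝ)) := by
    apply monotoneOn_of_deriv_nonneg (convex_Ici 0) hdiff.continuous.continuousOn
      hdiff.differentiableOn
    intro z hz
    rw [interior_Ici] at hz
    rw [(hd z).deriv]
    exact hp z hz.le
  have := hm self_mem_Ici (mem_Ici.mpr hy) hy
  simpa [h0] using this

lemma cos_quad : ∀ y : ℝ, 0 ≤ y → 0 ≤ Real.cos y - (1 - y^2/2) := by
  apply nonneg_of_hasDerivAt _ (fun y => y - Real.sin y)
  · simp
  · intro y
    have h := (Real.hasDerivAt_cos y).sub (((hasDerivAt_pow 2 y).div_const 2).const_sub 1)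
    convert h using 1
    all_goals first | rfl | (simp; ring)
  · intro y hy
    have := Real.sin_le hy
    linarith

lemma sin_cubic : ∀ y : ℝ, 0 ≤ y → 0 ≤ Real.sin y - (y - y^3/6) := by
  apply nonneg_of_hasDerivAt _ (fun y => Real.cos y - (1 - y^2/2))
  · simp
  · intro y
    have h := (Real.hasDerivAt_sin y).sub
      ((hasDerivAt_id y).sub ((hasDerivAt_pow 3 y).div_const 6))
    convert h using 1
    all_goals first | rfl | (simp; ring)
  · exact cos_quad

lemma cos_quart : ∀ y : ℝ, 0 ≤ y → 0 ≤ (1 - y^2/2 + y^4/24) - Real.cos y := by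
  apply nonneg_of_hasDerivAt _ (fun y => Real.sin y - (y - y^3/6))
  · simp
  · intro y
    have h := ((((hasDerivAt_pow 2 y).div_const 2).const_sub 1).add
      ((hasDerivAt_pow 4 y).div_const 24)).sub (Real.hasDerivAt_cos y)
    convert h using 1
    all_goals first | rfl | (simp; ring)
  · exact sin_cubic

lemma sin_quint : ∀ y : ℝ, 0 ≤ y → 0 ≤ (y - y^3/6 + y^5/120) - Real.sin y := by
  apply nonneg_of_hasDerivAt _ (fun y => (1 - y^2/2 + y^4/24) - Real.cos y)
  · simp
  · intro y
    have h := (((hasDerivAt_id y).sub ((hasDerivAt_pow 3 y).div_const 6)).add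
      ((hasDerivAt_pow 5 y).div_const 120)).sub (Real.hasDerivAt_sin y)
    convert h using 1
    all_goals first | rfl | (simp; ring)
  · exact cos_quart

lemma cos_six : ∀ y : ℝ, 0 ≤ y → 0 ≤ Real.cos y - (1 - y^2/2 + y^4/24 - y^6/720) := by
  apply nonneg_of_hasDerivAt _ (fun y => (y - y^3/6 + y^5/120) - Real.sin y)
  · simp
  · intro y
    have h := (Real.hasDerivAt_cos y).sub
      (((((hasDerivAt_pow 2 y).div_const 2).const_sub 1).add
        ((hasDerivAt_pow 4 y).div_const 24)).sub ((hasDerivAt_pow 6 y).div_const 720))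
    convert h using 1
    all_goals first | rfl | (simp; ring)
  · exact sin_quint

lemma sin_sept : ∀ y : ℝ, 0 ≤ y → 0 ≤ Real.sin y - (y - y^3/6 + y^5/120 - y^7/5040) := by
  apply nonneg_of_hasDerivAt _ (fun y => Real.cos y - (1 - y^2/2 + y^4/24 - y^6/720))
  · simp
  · intro y
    have h := (Real.hasDerivAt_sin y).sub
      (((((hasDerivAt_id y).sub ((hasDerivAt_pow 3 y).div_const 6)).add
        ((hasDerivAt_pow 5 y).div_const 120)).sub ((hasDerivAt_pow 7 y).div_const 5040)))
    convert h using 1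
    all_goals first | rfl | (simp; ring)
  · exact cos_six

theorem arccos_quadratic_positive :
    ∀ x ∈ Set.Ico (0 : ℝ) 1,
      (Real.arccos x) ^ 2 + x * Real.sqrt (1 - x ^ 2) * Real.arccos x + 2 * x ^ 2 - 2 > 0 := by
  intro x hx
  obtain ⟨hx0, hx1⟩ := hx
  set θ := Real.arccos x with hθdef
  have hθpos : 0 < θ := Real.arccos_pos.mpr hx1
  have hθle : θ ≤ π / 2 := by
    have := Real.arccos_le_pi_div_two.mpr hx0
    simpa [hθdef] using this
  have hcosθ : Real.cos θ = x := Real.cos_arccos (by linarith) (le_of_lt hx1)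
  have hsinθ : Real.sin θ = Real.sqrt (1 - x ^ 2) := Real.sin_arccos x
  rw [← hsinθ, ← hcosθ]
  -- bounds at u = 2θ
  have h2θ : (0:ℝ) ≤ 2 * θ := by linarith
  have hsin := sin_sept (2*θ) h2θ
  have hcos := cos_six (2*θ) h2θ
  have hs2 : Real.sin (2*θ) = 2 * Real.sin θ * Real.cos θ := Real.sin_two_mul θ
  have hc2 : Real.cos (2*θ) = 2 * Real.cos θ ^ 2 - 1 := Real.cos_two_mul θ
  rw [hs2] at hsin
  rw [hc2] at hcos
  have hθlt : θ < 1.58 := by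
    have : π < 3.15 := by
      have := Real.pi_lt_d2
      linarith
    linarith
  nlinarith [hsin, hcos, hθpos, hθlt, pow_pos hθpos 6, pow_pos hθpos 2,
    mul_pos (pow_pos hθpos 6) (by nlinarith : (0:ℝ) < 7 - 2 * θ^2)]
end

section
/- For every x ∈ (0,1), the inequality arccos(x) < (√(1+x) + 2√2)·√(1−x) / (1 + √(2(1+x))) holds; moreover, the function G(x) = arccos(x) − (√(1+x) + 2√2)·√(1−x) / (1 + √(2(1+x))) is strictly increasing on (0,1). -/
open Real Set

noncomputable def KK (θ : ℝ) : ℝ :=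
  θ - 2 * Real.sin (θ/2) * (Real.cos (θ/2) + 2) / (1 + 2 * Real.cos (θ/2))

lemma KK_hasDerivAt (θ : ℝ) (h : 1 + 2 * Real.cos (θ/2) ≠ 0) :
    HasDerivAt KK (1 -
      ((2 * Real.cos (θ/2) * (Real.cos (θ/2) + 2) + 2 * Real.sin (θ/2) * (-Real.sin (θ/2)))
          * (1 + 2 * Real.cos (θ/2))
        - 2 * Real.sin (θ/2) * (Real.cos (θ/2) + 2) * (2 * (-Real.sin (θ/2))))
        / (1 + 2 * Real.cos (θ/2))^2 * (1/2)) θ := by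
  set t := θ/2 with ht
  have hhalf : HasDerivAt (fun θ : ℝ => θ/2) (1/2) θ := (hasDerivAt_id θ).div_const 2
  have hN : HasDerivAt (fun t => 2 * Real.sin t * (Real.cos t + 2))
      (2 * Real.cos t * (Real.cos t + 2) + 2 * Real.sin t * (-Real.sin t)) t :=
    ((Real.hasDerivAt_sin t).const_mul 2).mul ((Real.hasDerivAt_cos t).add_const 2)
  have hD : HasDerivAt (fun t => 1 + 2 * Real.cos t) (2 * (-Real.sin t)) t :=
    ((Real.hasDerivAt_cos t).const_mul 2).const_add 1
  have hpsi := (hN.div hD h).comp θ hhalf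
  exact (hasDerivAt_id θ).sub (by simpa [Function.comp_def, Pi.div_def] using hpsi)

lemma KK_deriv_neg {θ : ℝ} (hθ : θ ∈ Set.Ioo 0 (π/2)) : deriv KK θ < 0 := by
  have h2 : θ/2 ∈ Set.Ioo 0 (π/4) := ⟨by linarith [hθ.1], by linarith [hθ.2]⟩
  have hc1 : Real.cos (θ/2) < 1 := by
    have := Real.cos_lt_cos_of_nonneg_of_le_pi (le_refl 0)
      (by linarith [h2.2, Real.pi_pos]) h2.1
    simpa using this
  have hc0 : 0 < Real.cos (θ/2) := by
    apply Real.cos_pos_of_mem_Ioo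
    constructor
    · linarith [h2.1, Real.pi_pos]
    · have := Real.pi_pos; linarith [h2.2]
  set c := Real.cos (θ/2)
  set s := Real.sin (θ/2)
  have hsc : s^2 + c^2 = 1 := Real.sin_sq_add_cos_sq _
  have hDpos : (0:ℝ) < 1 + 2 * c := by linarith
  have hd := (KK_hasDerivAt θ (ne_of_gt hDpos)).deriv
  rw [hd]
  have hD2 : (0:ℝ) < (1 + 2*c)^2 := by positivity
  have key : ((2 * c * (c + 2) + 2 * s * (-s)) * (1 + 2 * c)
      - 2 * s * (c + 2) * (2 * (-s))) / (1 + 2*c)^2 > 2 := by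
    rw [gt_iff_lt, lt_div_iff₀ hD2]
    nlinarith [sq_nonneg (c-1), sq_nonneg c]
  linarith

lemma KK_strictAnti : StrictAntiOn KK (Set.Ico 0 (π/2)) := by
  have hconv : Convex ℝ (Set.Ico (0:ℝ) (π/2)) := convex_Ico _ _
  apply strictAntiOn_of_deriv_neg hconv
  · apply ContinuousOn.sub continuousOn_id
    apply ContinuousOn.div
    · fun_prop
    · fun_prop
    · intro θ hθ
      have hc0 : 0 ≤ Real.cos (θ/2) := by
        apply Real.cos_nonneg_of_mem_Icc
        constructor
        · linarith [hθ.1, Real.pi_pos]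
        · linarith [hθ.2, Real.pi_pos]
      positivity
  · intro θ hθ
    rw [interior_Ico] at hθ
    exact KK_deriv_neg hθ

lemma KK_zero : KK 0 = 0 := by
  simp [KK]

lemma G_eq_KK {x : ℝ} (hx : x ∈ Set.Ioo (0:ℝ) 1) :
    Real.arccos x -
        (Real.sqrt (1 + x) + 2 * Real.sqrt 2) * Real.sqrt (1 - x) /
          (1 + Real.sqrt (2 * (1 + x))) = KK (Real.arccos x) := by
  set θ := Real.arccos x with hθdef
  have hθ0 : 0 < θ := Real.arccos_pos.2 hx.2
  have hθ2 : θ < π/2 := Real.arccos_lt_pi_div_two.2 hx.1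
  have hcos : Real.cos θ = x := Real.cos_arccos (by linarith [hx.1]) (le_of_lt hx.2)
  set c := Real.cos (θ/2) with hc
  set s := Real.sin (θ/2) with hs
  have hc0 : 0 < c := by
    apply Real.cos_pos_of_mem_Ioo
    constructor <;> [linarith [Real.pi_pos]; linarith [Real.pi_pos]]
  have hs0 : 0 ≤ s := Real.sin_nonneg_of_nonneg_of_le_pi (by linarith)
    (by linarith [Real.pi_pos])
  have hcos2 : x = 2 * c^2 - 1 := by
    rw [← hcos]
    have : θ = 2 * (θ/2) := by ring
    rw [this, Real.cos_two_mul]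
  have hsin2 : 1 - x = 2 * s^2 := by
    have h1 : s^2 + c^2 = 1 := Real.sin_sq_add_cos_sq _
    rw [hcos2]; nlinarith
  have h1x : 1 + x = 2 * c^2 := by rw [hcos2]; ring
  have e1 : Real.sqrt (1 - x) = Real.sqrt 2 * s := by
    rw [hsin2, Real.sqrt_mul (by norm_num), Real.sqrt_sq hs0]
  have e2 : Real.sqrt (1 + x) = Real.sqrt 2 * c := by
    rw [h1x, Real.sqrt_mul (by norm_num), Real.sqrt_sq hc0.le]
  have e3 : Real.sqrt (2 * (1 + x)) = 2 * c := by
    rw [h1x]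
    have : 2 * (2 * c^2) = (2*c)^2 := by ring
    rw [this, Real.sqrt_sq (by positivity)]
  rw [e1, e2, e3]
  have h2 : Real.sqrt 2 * Real.sqrt 2 = 2 := Real.mul_self_sqrt (by norm_num)
  have hD : (0:ℝ) < 1 + 2 * c := by linarith
  unfold KK
  rw [← hc, ← hs]
  have hnum : (Real.sqrt 2 * c + 2 * Real.sqrt 2) * (Real.sqrt 2 * s) = 2 * s * (c + 2) := by
    linear_combination (c * s + 2 * s) * h2
  rw [hnum]

theorem arccos_lt_and_G_strict_mono :
    (∀ x ∈ Set.Ioo (0 : ℝ) 1,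
      Real.arccos x <
        (Real.sqrt (1 + x) + 2 * Real.sqrt 2) * Real.sqrt (1 - x) /
          (1 + Real.sqrt (2 * (1 + x)))) ∧
    StrictMonoOn
      (fun x : ℝ => Real.arccos x -
        (Real.sqrt (1 + x) + 2 * Real.sqrt 2) * Real.sqrt (1 - x) /
          (1 + Real.sqrt (2 * (1 + x))))
      (Set.Ioo 0 1) := by
  have hmem : ∀ x ∈ Set.Ioo (0:ℝ) 1, Real.arccos x ∈ Set.Ico 0 (π/2) := by
    intro x hx
    exact ⟨(Real.arccos_pos.2 hx.2).le, Real.arccos_lt_pi_div_two.2 hx.1⟩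
  constructor
  · intro x hx
    have h0 : (0:ℝ) ∈ Set.Ico (0:ℝ) (π/2) := ⟨le_refl _, by positivity⟩
    have := KK_strictAnti h0 (hmem x hx) (Real.arccos_pos.2 hx.2)
    rw [KK_zero] at this
    have hG := G_eq_KK hx
    linarith [hG ▸ this]
  · intro x hx y hy hxy
    simp only
    rw [G_eq_KK hx, G_eq_KK hy]
    apply KK_strictAnti (hmem y hy) (hmem x hx)
    exact Real.strictAntiOn_arccos ⟨by linarith [hx.1], hx.2.le⟩ ⟨by linarith [hy.1], hy.2.le⟩ hxy
end
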